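/- arXiv:2305.07858 — 4 statements merged into one kernel-verified Lean document; each statement's English description precedes it below -/
import Mathlib

section
/- For every integer n ≥ 2, the sum over all compositions (c_1, …, c_k) of n all of whose parts satisfy c_i ≥ 2 of the product (c_1 − 1)(c_2 − 1)⋯(c_k − 1) equals 2^{n−2}. -/
open Finset

private def S (n : ℕ) : Finset (Composition n) :=
  Finset.univ.filter (fun c : Composition n => ∀ i ∈ c.blocks, 2 ≤ i)

private def fprod {n : ℕ} (c : Composition n) : ℕ := (c.blocks.map (fun i => i - 1)).prod

private def g (n : ℕ) : ℕ := ∑ c ∈ S n, fprod c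

private lemma blocks_eq_nil (c : Composition 0) : c.blocks = [] := by
  cases h : c.blocks with
  | nil => rfl
  | cons a t =>
    exfalso
    have hs := c.blocks_sum
    have ha : 0 < a := c.blocks_pos (by rw [h]; exact List.mem_cons_self)
    rw [h] at hs
    simp [List.sum_cons] at hs
    omega

private lemma g_zero : g 0 = 1 := by
  rw [g, S, Finset.filter_true_of_mem (fun c _ => by simp [blocks_eq_nil c])]
  rw [Finset.sum_congr rfl (fun c _ => show fprod c = 1 by simp [fprod, blocks_eq_nil c])]
  simp [Finset.card_univ, composition_card]

private lemma g_one : g 1 = 0 := by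
  rw [g]
  apply Finset.sum_eq_zero
  intro c hc
  exfalso
  rw [S, Finset.mem_filter] at hc
  have hne : c.blocks ≠ [] := by
    intro h
    have := c.blocks_sum
    rw [h] at this
    simp at this
  have hmem : c.blocks.head! ∈ c.blocks := List.head!_mem_self hne
  have h2 := hc.2 _ hmem
  have hle : c.blocks.head! ≤ c.blocks.sum :=
    List.single_le_sum (fun i _ => Nat.zero_le i) _ hmem
  rw [c.blocks_sum] at hle
  omega

private def consComp (m i : ℕ) (hi : i ≤ m) (c : Composition (m - i)) : Composition (m + 2) where
  blocks := (i + 2) :: c.blocks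
  blocks_pos := by
    intro j hj
    rcases List.mem_cons.1 hj with h | h
    · omega
    · exact c.blocks_pos h
  blocks_sum := by
    rw [List.sum_cons, c.blocks_sum]
    omega

private lemma g_rec (m : ℕ) : g (m + 2) = ∑ i ∈ range (m + 1), (i + 1) * g (m - i) := by
  have h : ∀ i ∈ range (m + 1), (i + 1) * g (m - i) = ∑ c ∈ S (m - i), (i + 1) * fprod c := by
    intro i _; rw [g, Finset.mul_sum]
  rw [Finset.sum_congr rfl h, Finset.sum_sigma']
  show ∑ c ∈ S (m + 2), fprod c = _
  -- key facts about elements of S (m+2)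
  have key : ∀ c ∈ S (m + 2), c.blocks ≠ [] ∧ 2 ≤ c.blocks.head! ∧ c.blocks.head! ≤ m + 2 ∧
      c.blocks.tail.sum = m - (c.blocks.head! - 2) := by
    intro c hc
    rw [S, Finset.mem_filter] at hc
    have hne : c.blocks ≠ [] := by
      intro h
      have := c.blocks_sum
      rw [h] at this
      simp at this
    have hmem : c.blocks.head! ∈ c.blocks := List.head!_mem_self hne
    have h2 := hc.2 _ hmem
    have hsum : c.blocks.head! + c.blocks.tail.sum = m + 2 := by
      have := c.blocks_sum
      rw [← List.cons_head!_tail hne, List.sum_cons] at this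
      omega
    exact ⟨hne, h2, by omega, by omega⟩
  refine Finset.sum_bij'
    (fun c hc => (⟨c.blocks.head! - 2,
      ⟨c.blocks.tail,
       fun {j} hj => c.blocks_pos (List.mem_of_mem_tail hj),
       (key c hc).2.2.2⟩⟩ : Σ i : ℕ, Composition (m - i)))
    (fun p hp => consComp m p.1 (by
      have := Finset.mem_sigma.1 hp
      have := Finset.mem_range.1 this.1
      omega) p.2)
    ?_ ?_ ?_ ?_ ?_
  · intro c hc
    obtain ⟨hne, h2, hle, hts⟩ := key c hc
    rw [Finset.mem_sigma]
    constructor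
    · rw [Finset.mem_range]
      show c.blocks.head! - 2 < m + 1
      omega
    · simp only [S, Finset.mem_filter, Finset.mem_univ, true_and]
      intro j hj
      rw [S, Finset.mem_filter] at hc
      exact hc.2 _ (List.mem_of_mem_tail hj)
  · intro p hp
    rw [S, Finset.mem_filter]
    refine ⟨Finset.mem_univ _, fun j hj => ?_⟩
    rcases List.mem_cons.1 hj with h | h
    · omega
    · have h2 := (Finset.mem_sigma.1 hp).2
      rw [S, Finset.mem_filter] at h2
      exact h2.2 _ h
  · intro c hc
    obtain ⟨hne, h2, hle, hts⟩ := key c hc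
    apply Composition.ext
    show (c.blocks.head! - 2 + 2) :: c.blocks.tail = c.blocks
    rw [Nat.sub_add_cancel h2, List.cons_head!_tail hne]
  · intro p hp
    rcases p with ⟨i, c⟩
    apply Sigma.ext
    · simp [consComp]
    · simp only [consComp]
      apply heq_of_eq
      apply Composition.ext
      rfl
  · intro c hc
    obtain ⟨hne, h2, hle, hts⟩ := key c hc
    show fprod c = (c.blocks.head! - 2 + 1) * _
    rw [fprod, fprod]
    conv_lhs => rw [← List.cons_head!_tail hne]
    rw [List.map_cons, List.prod_cons]
    congr 1
    omega

private lemma aux_sum (k : ℕ) :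
    (∑ i ∈ range (k + 1), (i + 1) * 2 ^ (k - i)) + (k + 3) = 2 ^ (k + 2) := by
  induction k with
  | zero => simp
  | succ k ih =>
    rw [Finset.sum_range_succ]
    have h1 : ∑ i ∈ range (k + 1), (i + 1) * 2 ^ (k + 1 - i)
        = 2 * ∑ i ∈ range (k + 1), (i + 1) * 2 ^ (k - i) := by
      rw [Finset.mul_sum]
      apply Finset.sum_congr rfl
      intro i hi
      have hik : k + 1 - i = (k - i) + 1 := by
        have := Finset.mem_range.1 hi; omega
      rw [hik, pow_succ]
      ring
    rw [h1]
    have h2 : 2 ^ (k + 1 + 2) = 2 * 2 ^ (k + 2) := by ring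
    have h3 : k + 1 - (k + 1) = 0 := by omega
    rw [h2, h3, pow_zero]
    omega

private lemma g_formula (m : ℕ) : g (m + 2) = 2 ^ m := by
  induction m using Nat.strong_induction_on with
  | _ m ih =>
    rw [g_rec]
    match m with
    | 0 => simp [g_zero]
    | 1 => simp [Finset.sum_range_succ, g_zero, g_one]
    | (p + 2) =>
      rw [Finset.sum_range_succ, Finset.sum_range_succ]
      have h1 : p + 2 - (p + 1) = 1 := by omega
      have h2 : p + 2 - (p + 2) = 0 := by omega
      rw [h1, h2, g_zero, g_one]
      have h3 : ∑ i ∈ range (p + 1), (i + 1) * g (p + 2 - i)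
          = ∑ i ∈ range (p + 1), (i + 1) * 2 ^ (p - i) := by
        apply Finset.sum_congr rfl
        intro i hi
        have hip : i ≤ p := by have := Finset.mem_range.1 hi; omega
        have : p + 2 - i = (p - i) + 2 := by omega
        rw [this, ih (p - i) (by omega)]
      rw [h3]
      have := aux_sum p
      omega

/-- For every integer `n ≥ 2`, the sum over all compositions of `n` all of whose parts
are at least `2` of the product of `(part − 1)` over all parts equals `2 ^ (n − 2)`. -/
theorem composition_parts_ge_two_prod_sub_one (n : ℕ) (hn : 2 ≤ n) :
    ∑ c ∈ Finset.univ.filter (fun c : Composition n => ∀ i ∈ c.blocks, 2 ≤ i),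
      (c.blocks.map (fun i => i - 1)).prod = 2 ^ (n - 2) := by
  obtain ⟨m, rfl⟩ : ∃ m, n = m + 2 := ⟨n - 2, by omega⟩
  have := g_formula m
  rw [g, S] at this
  simpa [fprod] using this
end

section
/- In NSym, for every integer n ≥ 1: Σ_{I ⊨ n} ε^I · Ψ^I = Σ_{I = (i_1, …, i_l) ⊨ n} i_1·(i_2 − 1)⋯(i_l − 1) · Λ^I, where both sums range over all compositions I of n. -/
open scoped Classical

noncomputable section

/-- `NSym = ℚ⟨Λ₁, Λ₂, …⟩`, the free associative `ℚ`-algebra on noncommuting generators. -/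
abbrev NSym : Type := FreeAlgebra ℚ ℕ

/-- The elementary noncommutative symmetric functions: `Λ 0 = 1` and `Λ (k+1)` is the
`(k+1)`-st generator. -/
def Lam : ℕ → NSym
  | 0 => 1
  | k + 1 => FreeAlgebra.ι ℚ k

/-- The complete homogeneous noncommutative symmetric functions, defined by `S 0 = 1` and
`S n = ∑_{k=1}^{n} (−1)^{k−1} Λ_k S_{n−k}` for `n ≥ 1`. -/
def Sc : ℕ → NSym
  | 0 => 1
  | n + 1 => ∑ k ∈ Finset.range (n + 1), ((-1 : ℚ) ^ k) • (Lam (k + 1) * Sc (n - k))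
  decreasing_by exact Nat.lt_succ_of_le (Nat.sub_le _ _)

/-- The noncommutative power sums of the first kind:
`Ψ n = ∑_{k=0}^{n−1} (−1)^k (n−k) Λ_k S_{n−k}`. -/
def Psi (n : ℕ) : NSym :=
  ∑ k ∈ Finset.range n, ((-1 : ℚ) ^ k * ((n - k : ℕ) : ℚ)) • (Lam k * Sc (n - k))

/-- `Λ^I`, the product of the `Λ`'s over the parts of a composition. -/
def LamProd {n : ℕ} (I : Composition n) : NSym := (I.blocks.map Lam).prod

/-- `S^I`, the product of the `S`'s over the parts of a composition. -/
def ScProd {n : ℕ} (I : Composition n) : NSym := (I.blocks.map Sc).prod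

/-- `Ψ^I`, the product of the `Ψ`'s over the parts of a composition. -/
def PsiProd {n : ℕ} (I : Composition n) : NSym := (I.blocks.map Psi).prod

/-- `J` is a coarsening of `I` if `I` can be partitioned into consecutive nonempty blocks
whose block sums, in order, form `J`. -/
def IsCoarsening (I J : List ℕ) : Prop :=
  ∃ P : List (List ℕ), (∀ p ∈ P, p ≠ []) ∧ P.flatten = I ∧ P.map List.sum = J

/-- The ribbon Schur function `R_I = ∑_{J a coarsening of I} (−1)^{ℓ(I)−ℓ(J)} S^J`. -/
def Rib {n : ℕ} (I : Composition n) : NSym :=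
  ∑ J : Composition n,
    if IsCoarsening I.blocks J.blocks then ((-1 : ℚ) ^ (I.length - J.length)) • ScProd J else 0

section AuxProof

open Finset PowerSeries

/-! ### Generic list lemmas -/

lemma list_prod_smul (c : ℕ → ℚ) (f : ℕ → NSym) (l : List ℕ) :
    (l.map (fun i => c i • f i)).prod = (l.map c).prod • (l.map f).prod := by
  induction l with
  | nil => simp
  | cons a t ih =>
      simp only [List.map_cons, List.prod_cons, ih, smul_mul_assoc, mul_smul_comm, smul_smul]
      rw [mul_comm (c a)]

lemma list_prod_neg_one_pow (l : List ℕ) :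
    (l.map (fun i => ((-1 : ℚ)) ^ (i - 1))).prod
      = (-1 : ℚ) ^ ((l.map (fun i => i - 1)).sum) := by
  induction l with
  | nil => simp
  | cons a t ih => simp [ih, pow_add]

lemma list_length_le_sum (l : List ℕ) (h : ∀ i ∈ l, 0 < i) : l.length ≤ l.sum := by
  induction l with
  | nil => simp
  | cons a t ih =>
      have ha := h a (by simp)
      have := ih (fun i hi => h i (by simp [hi]))
      simp only [List.length_cons, List.sum_cons]
      omega

lemma list_sum_sub_one (l : List ℕ) (h : ∀ i ∈ l, 0 < i) :
    (l.map (fun i => i - 1)).sum = l.sum - l.length := by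
  induction l with
  | nil => simp
  | cons a t ih =>
      have ha := h a (by simp)
      have ht : ∀ i ∈ t, 0 < i := fun i hi => h i (by simp [hi])
      have := list_length_le_sum t ht
      simp only [List.map_cons, List.sum_cons, List.length_cons, ih ht]
      omega

/-! ### Compositions: cons decomposition -/

lemma composition_zero_blocks (I : Composition 0) : I.blocks = [] := by
  have hs := I.blocks_sum
  cases hb : I.blocks with
  | nil => rfl
  | cons a t =>
      have ha : 0 < a := I.blocks_pos (by rw [hb]; exact List.mem_cons_self)
      rw [hb] at hs
      simp only [List.sum_cons] at hs
      omega

instance : Unique (Composition 0) where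
  default := ⟨[], by simp, by simp⟩
  uniq I := Composition.ext (composition_zero_blocks I)

lemma comp_blocks_ne_nil {n : ℕ} (I : Composition (n + 1)) : I.blocks ≠ [] := by
  intro h
  have hs := I.blocks_sum
  rw [h] at hs
  simp at hs

lemma comp_headI_tail {n : ℕ} (I : Composition (n + 1)) :
    I.blocks.headI + I.blocks.tail.sum = n + 1 := by
  have hs := I.blocks_sum
  cases hb : I.blocks with
  | nil => exact absurd hb (comp_blocks_ne_nil I)
  | cons a t => rw [hb] at hs; simpa using hs

lemma comp_headI_pos {n : ℕ} (I : Composition (n + 1)) : 0 < I.blocks.headI := by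
  cases hb : I.blocks with
  | nil => exact absurd hb (comp_blocks_ne_nil I)
  | cons a t =>
      have : a ∈ I.blocks := by rw [hb]; exact List.mem_cons_self
      simpa using I.blocks_pos this

/-- prepend a part `k+1` to a composition of `n - k` (where `k ≤ n`). -/
def compCons (n k : ℕ) (hk : k < n + 1) (J : Composition (n - k)) : Composition (n + 1) :=
  ⟨(k + 1) :: J.blocks,
   by
     intro i hi
     rcases List.mem_cons.1 hi with h | h
     · omega
     · exact J.blocks_pos h,
   by
     have := J.blocks_sum
     simp only [List.sum_cons, this]
     omega⟩

@[simp] lemma compCons_blocks (n k : ℕ) (hk : k < n + 1) (J : Composition (n - k)) :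
    (compCons n k hk J).blocks = (k + 1) :: J.blocks := rfl

def consEquiv (n : ℕ) : Composition (n + 1) ≃ Σ k : Fin (n + 1), Composition (n - (k : ℕ)) where
  toFun I :=
    ⟨⟨I.blocks.headI - 1, by
        have h1 := comp_headI_tail I
        have h2 := comp_headI_pos I
        omega⟩,
     ⟨I.blocks.tail,
      by
        intro i hi
        exact I.blocks_pos (List.mem_of_mem_tail hi),
      by
        have h1 := comp_headI_tail I
        have h2 := comp_headI_pos I
        simp only
        omega⟩⟩
  invFun p := compCons n p.1 p.1.isLt p.2
  left_inv I := by
    apply Composition.ext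
    have h2 := comp_headI_pos I
    simp only [compCons_blocks]
    have h1 : I.blocks.headI - 1 + 1 = I.blocks.headI := by omega
    rw [h1]
    cases hb : I.blocks with
    | nil => exact absurd hb (comp_blocks_ne_nil I)
    | cons a t => simp
  right_inv p := by
    rcases p with ⟨⟨k, hk⟩, J⟩
    refine Sigma.ext ?_ ?_
    · simp [compCons]
    · apply heq_of_eq
      apply Composition.ext
      simp [compCons]

lemma sum_composition_succ (n : ℕ) (F : Composition (n + 1) → NSym) :
    ∑ I : Composition (n + 1), F I
      = ∑ k : Fin (n + 1), ∑ J : Composition (n - (k : ℕ)),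
          F (compCons n (k : ℕ) k.isLt J) := by
  rw [← Equiv.sum_comp (consEquiv n).symm F]
  rw [← Finset.univ_sigma_univ, Finset.sum_sigma]
  rfl

/-! ### The generic recursion -/

def Egen (g : ℕ → NSym) : ℕ → NSym
  | 0 => 1
  | n + 1 => ∑ k ∈ Finset.range (n + 1), g (k + 1) * Egen g (n - k)
  decreasing_by exact Nat.lt_succ_of_le (Nat.sub_le _ _)

lemma sum_comp_prod (g : ℕ → NSym) : ∀ n, (∑ I : Composition n, (I.blocks.map g).prod) = Egen g n := by
  intro n
  induction n using Nat.strong_induction_on with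
  | _ n ih =>
    match n with
    | 0 =>
        rw [Fintype.sum_unique]
        simp [Egen, composition_zero_blocks]
    | n + 1 =>
        rw [sum_composition_succ n (fun I => (I.blocks.map g).prod)]
        rw [Egen, ← Fin.sum_univ_eq_sum_range (fun k => g (k + 1) * Egen g (n - k))]
        refine Finset.sum_congr rfl fun k _ => ?_
        simp only [compCons_blocks, List.map_cons, List.prod_cons]
        rw [← Finset.mul_sum, ih (n - (k : ℕ)) (by omega)]

/-! ### The two sides as `Egen`s -/

def gA (i : ℕ) : NSym := ((-1 : ℚ)) ^ (i - 1) • Psi i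

def gM (i : ℕ) : NSym := (((i - 1 : ℕ) : ℚ)) • Lam i

lemma lhs_eq (n : ℕ) :
    (∑ I : Composition n, ((-1 : ℚ) ^ (n - I.length)) • PsiProd I) = Egen gA n := by
  rw [← sum_comp_prod gA n]
  refine Finset.sum_congr rfl fun I _ => ?_
  unfold gA
  rw [list_prod_smul, list_prod_neg_one_pow,
    list_sum_sub_one I.blocks (fun i hi => I.blocks_pos hi), I.blocks_sum,
    Composition.blocks_length]
  rfl

lemma rhs_eq (m : ℕ) :
    (∑ I : Composition (m + 1),
        ((I.blocks.headI * ((I.blocks.tail).map (fun i => i - 1)).prod : ℕ) : ℚ) • LamProd I)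
      = ∑ k ∈ Finset.range (m + 1), ((k + 1 : ℚ)) • (Lam (k + 1) * Egen gM (m - k)) := by
  rw [sum_composition_succ m (fun I =>
    ((I.blocks.headI * ((I.blocks.tail).map (fun i => i - 1)).prod : ℕ) : ℚ) • LamProd I)]
  rw [← Fin.sum_univ_eq_sum_range (fun k => ((k + 1 : ℚ)) • (Lam (k + 1) * Egen gM (m - k)))]
  refine Finset.sum_congr rfl fun k _ => ?_
  have inner : (∑ J : Composition (m - (k : ℕ)),
      (((J.blocks.map (fun i => i - 1)).prod : ℕ) : ℚ) • LamProd J) = Egen gM (m - (k : ℕ)) := by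
    rw [← sum_comp_prod gM (m - (k : ℕ))]
    refine Finset.sum_congr rfl fun J _ => ?_
    unfold gM
    rw [list_prod_smul]
    rw [Nat.cast_list_prod, List.map_map]
    rfl
  have step : ∀ J : Composition (m - (k : ℕ)),
      (((compCons m (k : ℕ) k.isLt J).blocks.headI *
          (((compCons m (k : ℕ) k.isLt J).blocks.tail).map (fun i => i - 1)).prod : ℕ) : ℚ) •
            LamProd (compCons m (k : ℕ) k.isLt J)
        = (((k : ℕ) : ℚ) + 1) • (Lam ((k : ℕ) + 1) *
            ((((J.blocks.map (fun i => i - 1)).prod : ℕ) : ℚ) • LamProd J)) := by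
    intro J
    unfold LamProd
    simp only [compCons_blocks, List.headI_cons, List.tail_cons, List.map_cons, List.prod_cons]
    push_cast
    rw [mul_smul, mul_smul_comm]
  rw [Finset.sum_congr rfl (fun J _ => step J), ← Finset.smul_sum, ← Finset.mul_sum, inner]

/-! ### Power series algebra -/

lemma neg_one_pow_sub {k n : ℕ} (h : k ≤ n) :
    ((-1 : ℚ)) ^ (n - k) = (-1) ^ n * (-1) ^ k := by
  rcases Nat.le.dest h with ⟨m, rfl⟩
  rw [Nat.add_sub_cancel_left, pow_add, mul_comm, ← mul_assoc, ← pow_add, ← two_mul, pow_mul,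
    neg_one_sq, one_pow, one_mul]

lemma Sc_succ (n : ℕ) :
    Sc (n + 1) = ∑ k ∈ Finset.range (n + 1), ((-1 : ℚ) ^ k) • (Lam (k + 1) * Sc (n - k)) := by
  rw [Sc]

lemma S_rel (n : ℕ) :
    (∑ k ∈ Finset.range (n + 2), ((-1 : ℚ)) ^ k • (Lam k * Sc (n + 1 - k))) = 0 := by
  rw [Finset.sum_range_succ']
  have h1 : ∀ k ∈ Finset.range (n + 1),
      ((-1 : ℚ)) ^ (k + 1) • (Lam (k + 1) * Sc (n + 1 - (k + 1)))
        = -(((-1 : ℚ)) ^ k • (Lam (k + 1) * Sc (n - k))) := by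
    intro k _
    rw [pow_succ]
    simp [neg_smul]
  rw [Finset.sum_congr rfl h1, Finset.sum_neg_distrib, ← Sc_succ]
  simp [Lam]

def Ls : PowerSeries NSym := PowerSeries.mk Lam
def Sneg : PowerSeries NSym := PowerSeries.mk (fun n => ((-1 : ℚ)) ^ n • Sc n)
def Aps : PowerSeries NSym := PowerSeries.mk (Egen gA)
def Mps : PowerSeries NSym := PowerSeries.mk (Egen gM)
def Nu : PowerSeries NSym := PowerSeries.mk (fun n => (n : ℚ) • Lam n)
def PsiT : PowerSeries NSym := PowerSeries.mk (fun n => ((-1 : ℚ)) ^ (n - 1) • Psi n)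
def Mu : PowerSeries NSym := Nu - (Ls - 1)

lemma Psi_zero : Psi 0 = 0 := by simp [Psi]

lemma Ls_mul_Sneg : Ls * Sneg = 1 := by
  ext n
  rw [PowerSeries.coeff_mul, Finset.Nat.sum_antidiagonal_eq_sum_range_succ_mk]
  simp only [Ls, Sneg, PowerSeries.coeff_mk]
  match n with
  | 0 => simp [Lam, Sc]
  | m + 1 =>
      have h1 : ∀ k ∈ Finset.range (m + 2),
          Lam k * (((-1 : ℚ)) ^ (m + 1 - k) • Sc (m + 1 - k))
            = ((-1 : ℚ)) ^ (m + 1) • (((-1 : ℚ)) ^ k • (Lam k * Sc (m + 1 - k))) := by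
        intro k hk
        rw [Finset.mem_range] at hk
        rw [mul_smul_comm, neg_one_pow_sub (by omega : k ≤ m + 1), mul_smul]
      rw [Finset.sum_congr rfl h1, ← Finset.smul_sum, S_rel, smul_zero]
      simp [PowerSeries.coeff_one]

lemma psi_alt (n : ℕ) :
    Psi (n + 1) = ∑ k ∈ Finset.range (n + 2),
      (((-1 : ℚ)) ^ (k + 1) * (k : ℚ)) • (Lam k * Sc (n + 1 - k)) := by
  have h0 : Psi (n + 1) = ∑ k ∈ Finset.range (n + 2),
      (((-1 : ℚ)) ^ k * (((n + 1 - k : ℕ)) : ℚ)) • (Lam k * Sc (n + 1 - k)) := by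
    rw [Finset.sum_range_succ]
    simp [Psi]
  rw [h0, ← sub_eq_zero, ← Finset.sum_sub_distrib]
  have h2 : ∀ k ∈ Finset.range (n + 2),
      (((-1 : ℚ)) ^ k * (((n + 1 - k : ℕ)) : ℚ)) • (Lam k * Sc (n + 1 - k))
        - (((-1 : ℚ)) ^ (k + 1) * (k : ℚ)) • (Lam k * Sc (n + 1 - k))
        = ((n + 1 : ℚ)) • (((-1 : ℚ)) ^ k • (Lam k * Sc (n + 1 - k))) := by
    intro k hk
    rw [Finset.mem_range] at hk
    rw [← sub_smul, smul_smul]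
    congr 1
    have : (((n + 1 - k : ℕ)) : ℚ) = (n : ℚ) + 1 - (k : ℚ) := by
      rw [Nat.cast_sub (by omega)]
      push_cast
      ring
    rw [this, pow_succ]
    ring
  rw [Finset.sum_congr rfl h2, ← Finset.smul_sum, S_rel, smul_zero]

lemma PsiT_eq : PsiT = Nu * Sneg := by
  ext n
  rw [PowerSeries.coeff_mul, Finset.Nat.sum_antidiagonal_eq_sum_range_succ_mk]
  simp only [PsiT, Nu, Sneg, PowerSeries.coeff_mk]
  match n with
  | 0 => simp [Psi_zero]
  | m + 1 =>
      rw [psi_alt m, Finset.smul_sum]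
      refine Finset.sum_congr rfl fun k hk => ?_
      rw [Finset.mem_range] at hk
      rw [smul_mul_assoc, mul_smul_comm, smul_smul, smul_smul,
        neg_one_pow_sub (by omega : k ≤ m + 1)]
      congr 1
      simp only [Nat.add_sub_cancel]
      rw [pow_succ]
      ring

lemma mk_recursion (g : ℕ → NSym) (φ : PowerSeries NSym)
    (h0 : (PowerSeries.coeff 0) φ = 0)
    (h : ∀ j : ℕ, (PowerSeries.coeff (j + 1)) φ = g (j + 1)) :
    PowerSeries.mk (Egen g) = 1 + φ * PowerSeries.mk (Egen g) := by
  ext n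
  rw [map_add, PowerSeries.coeff_mul, Finset.Nat.sum_antidiagonal_eq_sum_range_succ_mk]
  match n with
  | 0 => simp [Egen, h0, PowerSeries.coeff_one]
  | m + 1 =>
      rw [Finset.sum_range_succ', h0, zero_mul, add_zero]
      simp only [PowerSeries.coeff_mk, PowerSeries.coeff_one]
      rw [Egen]
      have : ∀ j ∈ Finset.range (m + 1),
          (PowerSeries.coeff (j + 1)) φ * Egen g (m + 1 - (j + 1))
            = g (j + 1) * Egen g (m - j) := by
        intro j _
        rw [h j, Nat.succ_sub_succ]
      rw [Finset.sum_congr rfl this]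
      simp

lemma Aps_rec : Aps = 1 + PsiT * Aps := by
  refine mk_recursion gA PsiT ?_ ?_
  · simp [PsiT, Psi_zero]
  · intro j
    simp [PsiT, gA]

lemma Mu_coeff_zero : (PowerSeries.coeff 0) Mu = 0 := by
  simp [Mu, Nu, Ls, PowerSeries.coeff_one, Lam, PowerSeries.coeff_zero_eq_constantCoeff]

lemma Mps_rec : Mps = 1 + Mu * Mps := by
  refine mk_recursion gM Mu ?_ ?_
  · exact Mu_coeff_zero
  · intro j
    simp only [Mu, Nu, Ls, map_sub, PowerSeries.coeff_mk, PowerSeries.coeff_one, gM]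
    rw [if_neg (by omega)]
    have : ((j + 1 : ℕ) : ℚ) • Lam (j + 1) - Lam (j + 1) = ((j + 1 : ℚ) - 1) • Lam (j + 1) := by
      rw [sub_smul, one_smul]
      push_cast
      ring_nf
    rw [sub_zero, this]
    congr 1
    push_cast
    ring

lemma fixed_point_unique (μ X Y : PowerSeries NSym)
    (h0 : (PowerSeries.coeff 0) μ = 0)
    (hX : X = 1 + μ * X) (hY : Y = 1 + μ * Y) : X = Y := by
  have hD : X - Y = μ * (X - Y) := by
    rw [mul_sub]
    nth_rewrite 1 [hX, hY]
    abel
  have key : ∀ n, (PowerSeries.coeff n) (X - Y) = 0 := by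
    intro n
    induction n using Nat.strong_induction_on with
    | _ n ih =>
      conv_lhs => rw [hD]
      rw [PowerSeries.coeff_mul]
      apply Finset.sum_eq_zero
      rintro ⟨j, m⟩ hjm
      rw [Finset.HasAntidiagonal.mem_antidiagonal] at hjm
      rcases Nat.eq_zero_or_pos j with hj | hj
      · subst hj
        rw [h0, zero_mul]
      · have hm : m < n := by omega
        rw [ih m hm, mul_zero]
  have : X - Y = 0 := by
    ext n
    simpa using key n
  exact sub_eq_zero.mp this

lemma core (m : ℕ) :
    Egen gA (m + 1) = ∑ k ∈ Finset.range (m + 1),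
      ((k + 1 : ℚ)) • (Lam (k + 1) * Egen gM (m - k)) := by
  set BB := Sneg * Aps with hBBdef
  have hLB : Ls * BB = Aps := by
    rw [hBBdef, ← mul_assoc, Ls_mul_Sneg, one_mul]
  have hAB : Aps = 1 + Nu * BB := by
    nth_rewrite 1 [Aps_rec]
    rw [PsiT_eq, mul_assoc, ← hBBdef]
  have hB : BB = 1 + Mu * BB := by
    have h1 : Mu * BB = Nu * BB - Ls * BB + BB := by
      simp only [Mu]
      noncomm_ring
    have h2 : (1 : PowerSeries NSym) + (Nu * BB - Aps + BB) = BB := by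
      rw [hAB]
      abel
    rw [h1, hLB, h2]
  have hBM : BB = Mps := fixed_point_unique Mu _ _ Mu_coeff_zero hB Mps_rec
  have hA : Aps = 1 + Nu * Mps := by rw [hAB, hBM]
  have := congrArg (PowerSeries.coeff (m + 1)) hA
  rw [map_add, PowerSeries.coeff_mul, Finset.Nat.sum_antidiagonal_eq_sum_range_succ_mk,
    Finset.sum_range_succ'] at this
  simp only [Aps, Nu, Mps, PowerSeries.coeff_mk, PowerSeries.coeff_one] at this
  rw [this, if_neg (Nat.succ_ne_zero m)]
  simp only [Nat.cast_zero, zero_smul, zero_mul, add_zero, zero_add]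
  refine Finset.sum_congr rfl fun k _ => ?_
  rw [Nat.succ_sub_succ, smul_mul_assoc]
  congr 1
  push_cast
  ring

end AuxProof

/-- In `NSym`, for every `n ≥ 1`:
`∑_{I ⊨ n} ε^I Ψ^I = ∑_{I=(i₁,…,i_l) ⊨ n} i₁(i₂−1)⋯(i_l−1) Λ^I`. -/
theorem sum_eps_psi_eq_sum_coeff_lam (n : ℕ) (hn : 1 ≤ n) :
    ∑ I : Composition n, ((-1 : ℚ) ^ (n - I.length)) • PsiProd I
      = ∑ I : Composition n,
          ((I.blocks.headI * ((I.blocks.tail).map (fun i => i - 1)).prod : ℕ) : ℚ) •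
            LamProd I := by
  obtain ⟨m, rfl⟩ : ∃ m, n = m + 1 := ⟨n - 1, by omega⟩
  rw [lhs_eq, rhs_eq]
  exact core m


end
end

section
/- In NSym, for every integer n ≥ 1: 2 · Σ_{I = (i_1, …, i_l) ⊨ n} i_1·(i_2 − 1)⋯(i_l − 1) · Λ^I = Σ_{I ∈ 𝒞_n} 2^{m_1(I)} · R_I, where the first sum is over all compositions I of n, 𝒞_n is the set of compositions of n all of whose parts are 1 or 2 and whose last part is 1, and m_1(I) is the number of parts of I equal to 1. -/
open scoped Classical

noncomputable section

/-- compositions of `n` as lists of positive integers -/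
def comps (n : ℕ) : Finset (List ℕ) := Finset.univ.image (fun c : Composition n => c.blocks)

lemma comp_ext {n : ℕ} (a b : Composition n) (h : a.blocks = b.blocks) : a = b := by
  cases a; cases b; simpa using h

lemma mem_comps {n : ℕ} {L : List ℕ} :
    L ∈ comps n ↔ (∀ x ∈ L, 0 < x) ∧ L.sum = n := by
  constructor
  · rintro h
    rcases Finset.mem_image.1 h with ⟨c, -, rfl⟩
    exact ⟨fun x hx => c.blocks_pos hx, c.blocks_sum⟩
  · rintro ⟨h1, h2⟩
    exact Finset.mem_image.2 ⟨⟨L, fun hx => h1 _ hx, h2⟩, Finset.mem_univ _, rfl⟩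

lemma sum_comps {n : ℕ} {M : Type*} [AddCommMonoid M] (f : List ℕ → M) :
    ∑ I : Composition n, f I.blocks = ∑ L ∈ comps n, f L := by
  refine Finset.sum_image (fun a _ b _ h => comp_ext a b h) |>.symm

lemma comps_zero : comps 0 = {[]} := by
  ext L
  simp only [mem_comps, Finset.mem_singleton]
  constructor
  · rintro ⟨h1, h2⟩
    cases L with
    | nil => rfl
    | cons x t =>
      exfalso
      have := h1 x (by simp)
      simp at h2; omega
  · rintro rfl; simp

lemma pos_sum_pos {L : List ℕ} (h : ∀ x ∈ L, 0 < x) (hne : L ≠ []) : 0 < L.sum := by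
  cases L with
  | nil => exact absurd rfl hne
  | cons x t =>
    have := h x (by simp)
    simp only [List.sum_cons]; omega

lemma ne_nil_of_mem_comps {n : ℕ} (hn : 1 ≤ n) {L : List ℕ} (hL : L ∈ comps n) : L ≠ [] := by
  rintro rfl
  rw [mem_comps] at hL
  simp at hL; omega

lemma length_le_sum {L : List ℕ} (h : ∀ x ∈ L, 0 < x) : L.length ≤ L.sum := by
  induction L with
  | nil => simp
  | cons x t ih =>
    have hx := h x (by simp)
    have := ih (fun y hy => h y (by simp [hy]))
    simp only [List.length_cons, List.sum_cons]; omega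

/-- sum over compositions, peeling the first part -/
lemma sum_comps_cons {n : ℕ} {M : Type*} [AddCommMonoid M] (f : List ℕ → M) :
    ∑ L ∈ comps (n+1), f L
      = ∑ k ∈ Finset.Icc 1 (n+1), ∑ J ∈ comps (n+1-k), f (k :: J) := by
  rw [Finset.sum_sigma']
  refine (Finset.sum_nbij' (i := fun p => p.1 :: p.2) (j := fun L => (⟨L.headI, L.tail⟩ : Σ _ : ℕ, List ℕ))
    ?_ ?_ ?_ ?_ ?_).symm
  · rintro ⟨k, J⟩ hp
    simp only [Finset.mem_sigma, Finset.mem_Icc, mem_comps] at hp ⊢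
    obtain ⟨⟨hk1, hk2⟩, hJ1, hJ2⟩ := hp
    constructor
    · intro x hx
      rcases List.mem_cons.1 hx with rfl | hx
      · omega
      · exact hJ1 x hx
    · simp only [List.sum_cons, hJ2]; omega
  · intro L hL
    have hne : L ≠ [] := ne_nil_of_mem_comps (by omega) hL
    rw [mem_comps] at hL
    obtain ⟨h1, h2⟩ := hL
    cases L with
    | nil => exact absurd rfl hne
    | cons x t =>
      simp only [Finset.mem_sigma, Finset.mem_Icc, mem_comps, List.headI, List.tail]
      have hx := h1 x (by simp)
      simp only [List.sum_cons] at h2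
      refine ⟨⟨by omega, by omega⟩, fun y hy => h1 y (by simp [hy]), by omega⟩
  · rintro ⟨k, J⟩ hp; simp
  · intro L hL
    have hne : L ≠ [] := ne_nil_of_mem_comps (by omega) hL
    cases L with
    | nil => exact absurd rfl hne
    | cons x t => rfl
  · rintro ⟨k, J⟩ hp; rfl

lemma sum_comps_rev {n : ℕ} {M : Type*} [AddCommMonoid M] (f : List ℕ → M) :
    ∑ L ∈ comps n, f L = ∑ L ∈ comps n, f L.reverse := by
  refine Finset.sum_nbij' (i := fun L => L.reverse) (j := fun L => L.reverse) ?_ ?_ ?_ ?_ ?_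
  · intro L hL; rw [mem_comps] at hL ⊢
    exact ⟨fun x hx => hL.1 x (List.mem_reverse.1 hx), by rw [List.sum_reverse]; exact hL.2⟩
  · intro L hL; rw [mem_comps] at hL ⊢
    exact ⟨fun x hx => hL.1 x (List.mem_reverse.1 hx), by rw [List.sum_reverse]; exact hL.2⟩
  · intro L _; simp
  · intro L _; simp
  · intro L _; simp

/-- sum over compositions, peeling the last part -/
lemma sum_comps_snoc {n : ℕ} {M : Type*} [AddCommMonoid M] (f : List ℕ → M) :
    ∑ L ∈ comps (n+1), f L
      = ∑ k ∈ Finset.Icc 1 (n+1), ∑ J ∈ comps (n+1-k), f (J ++ [k]) := by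
  rw [sum_comps_rev, sum_comps_cons]
  refine Finset.sum_congr rfl fun k _ => ?_
  rw [sum_comps_rev]
  refine Finset.sum_congr rfl fun J _ => ?_
  simp

def cuts (L : List ℕ) : Finset ℕ := (Finset.range L.length).image (fun i => (L.take (i+1)).sum)

lemma cuts_nil : cuts [] = ∅ := by simp [cuts]

lemma cuts_singleton (k : ℕ) : cuts [k] = {k} := by
  simp [cuts]

lemma cuts_append (A B : List ℕ) :
    cuts (A ++ B) = cuts A ∪ (cuts B).image (· + A.sum) := by
  ext x
  constructor
  · intro hx
    rcases Finset.mem_image.1 hx with ⟨i, hi, rfl⟩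
    rw [Finset.mem_range, List.length_append] at hi
    by_cases h : i < A.length
    · refine Finset.mem_union_left _ (Finset.mem_image.2 ⟨i, Finset.mem_range.2 h, ?_⟩)
      rw [List.take_append]
      have h0 : i + 1 - A.length = 0 := by omega
      rw [h0]; simp
    · refine Finset.mem_union_right _ (Finset.mem_image.2
        ⟨(List.take (i - A.length + 1) B).sum,
          Finset.mem_image.2 ⟨i - A.length, Finset.mem_range.2 (by omega), rfl⟩, ?_⟩)
      rw [List.take_append,
        List.take_of_length_le (show A.length ≤ i+1 by omega)]
      have h2 : i + 1 - A.length = (i - A.length) + 1 := by omega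
      rw [h2, List.sum_append]
      omega
  · intro hx
    rcases Finset.mem_union.1 hx with hx | hx
    · rcases Finset.mem_image.1 hx with ⟨i, hi, rfl⟩
      rw [Finset.mem_range] at hi
      refine Finset.mem_image.2 ⟨i, Finset.mem_range.2
        (by simp only [List.length_append]; omega), ?_⟩
      rw [List.take_append]
      have h0 : i + 1 - A.length = 0 := by omega
      rw [h0]; simp
    · rcases Finset.mem_image.1 hx with ⟨y, hy, rfl⟩
      rcases Finset.mem_image.1 hy with ⟨i, hi, rfl⟩
      rw [Finset.mem_range] at hi
      refine Finset.mem_image.2 ⟨A.length + i, Finset.mem_range.2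
        (by simp only [List.length_append]; omega), ?_⟩
      rw [List.take_append,
        List.take_of_length_le (show A.length ≤ A.length + i + 1 by omega)]
      have h2 : A.length + i + 1 - A.length = i + 1 := by omega
      rw [h2, List.sum_append]
      omega

lemma cuts_snoc (A : List ℕ) (k : ℕ) :
    cuts (A ++ [k]) = insert (A.sum + k) (cuts A) := by
  rw [cuts_append, cuts_singleton, Finset.insert_eq, Finset.union_comm]
  congr 1
  simp [add_comm]

lemma cuts_cons (x : ℕ) (L : List ℕ) :
    cuts (x :: L) = insert x ((cuts L).image (· + x)) := by
  have : x :: L = [x] ++ L := rfl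
  rw [this, cuts_append, cuts_singleton, Finset.insert_eq]
  simp

lemma sum_mem_cuts {L : List ℕ} (h : L ≠ []) : L.sum ∈ cuts L := by
  have hlen : 1 ≤ L.length := List.length_pos_iff.2 h
  refine Finset.mem_image.2 ⟨L.length - 1, Finset.mem_range.2 (by omega), ?_⟩
  rw [List.take_of_length_le (by omega)]

lemma cuts_subset {L : List ℕ} (h : ∀ x ∈ L, 0 < x) :
    cuts L ⊆ Finset.Icc 1 L.sum := by
  intro x hx
  rcases Finset.mem_image.1 hx with ⟨i, hi, rfl⟩
  rw [Finset.mem_range] at hi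
  rw [Finset.mem_Icc]
  constructor
  · refine pos_sum_pos (fun y hy => h y (List.mem_of_mem_take hy)) ?_
    intro hcon
    have := congrArg List.length hcon
    simp only [List.length_take, List.length_nil] at this
    omega
  · conv_rhs => rw [← List.take_append_drop (i+1) L]
    rw [List.sum_append]
    omega

lemma take_sum_lt {L : List ℕ} (h : ∀ x ∈ L, 0 < x) {i j : ℕ} (hij : i < j)
    (hj : j < L.length) : (L.take (i+1)).sum < (L.take (j+1)).sum := by
  have key : L.take (j+1) = L.take (i+1) ++ (L.drop (i+1)).take (j-i) := by
    rw [← List.take_add]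
    have : (i+1) + (j-i) = j+1 := by omega
    rw [this]
  rw [key, List.sum_append]
  have hpos : 0 < ((L.drop (i+1)).take (j-i)).sum := by
    refine pos_sum_pos (fun y hy => h y (List.mem_of_mem_drop (List.mem_of_mem_take hy))) ?_
    intro hcon
    have := congrArg List.length hcon
    simp only [List.length_take, List.length_drop, List.length_nil] at this
    omega
  omega

lemma card_cuts {L : List ℕ} (h : ∀ x ∈ L, 0 < x) : (cuts L).card = L.length := by
  rw [cuts, Finset.card_image_of_injOn, Finset.card_range]
  intro i hi j hj hij
  simp only [Finset.coe_range, Set.mem_Iio] at hi hj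
  dsimp at hij
  rcases lt_trichotomy i j with hlt | heq | hgt
  · have := take_sum_lt h hlt hj; omega
  · exact heq
  · have := take_sum_lt h hgt hi; omega


lemma cuts_subset_of_partition :
    ∀ (P : List (List ℕ)), (∀ p ∈ P, p ≠ []) →
      cuts (P.map List.sum) ⊆ cuts P.flatten := by
  intro P
  induction P with
  | nil => intro _; simp [cuts_nil]
  | cons q P ih =>
    intro h
    rw [List.map_cons, List.flatten_cons, cuts_cons, cuts_append]
    intro x hx
    rcases Finset.mem_insert.1 hx with rfl | hx
    · exact Finset.mem_union_left _ (sum_mem_cuts (h q (by simp)))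
    · rcases Finset.mem_image.1 hx with ⟨y, hy, rfl⟩
      exact Finset.mem_union_right _
        (Finset.mem_image.2 ⟨y, ih (fun p hp => h p (by simp [hp])) hy, rfl⟩)

lemma coarsening_of_cuts_subset :
    ∀ (J L : List ℕ), (∀ x ∈ J, 0 < x) → (∀ x ∈ L, 0 < x) → J.sum = L.sum →
      cuts J ⊆ cuts L → IsCoarsening L J := by
  intro J
  induction J with
  | nil =>
    intro L _ hL hsum _
    have : L = [] := by
      by_contra hne
      have := pos_sum_pos hL hne
      simp at hsum; omega
    exact ⟨[], by simp, by simp [this], by simp⟩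
  | cons j J' ih =>
    intro L hJ hL hsum hsub
    have hj : 0 < j := hJ j (by simp)
    by_cases hJ' : J' = []
    · subst hJ'
      have hLsum : L.sum = j := by simpa using hsum.symm
      have hLne : L ≠ [] := by
        rintro rfl; simp at hLsum; omega
      exact ⟨[L], by simp [hLne], by simp, by simp [hLsum]⟩
    · have hjc : j ∈ cuts L := by
        apply hsub
        rw [cuts_cons]
        exact Finset.mem_insert_self _ _
      rcases Finset.mem_image.1 hjc with ⟨i, hi, hEq⟩
      rw [Finset.mem_range] at hi
      set L₁ := L.take (i+1) with hL₁
      set L₂ := L.drop (i+1) with hL₂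
      have hLapp : L₁ ++ L₂ = L := List.take_append_drop _ _
      have hL₁pos : ∀ x ∈ L₁, 0 < x := fun x hx => hL x (List.mem_of_mem_take hx)
      have hL₂pos : ∀ x ∈ L₂, 0 < x := fun x hx => hL x (List.mem_of_mem_drop hx)
      have hL₁ne : L₁ ≠ [] := by
        intro hcon
        have := congrArg List.length hcon
        simp only [hL₁, List.length_take, List.length_nil] at this
        omega
      have hL₁sum : L₁.sum = j := hEq
      have hsum2 : J'.sum = L₂.sum := by
        have : L₁.sum + L₂.sum = L.sum := by rw [← List.sum_append, hLapp]
        simp only [List.sum_cons] at hsum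
        omega
      have hsub2 : cuts J' ⊆ cuts L₂ := by
        intro x hx
        have hx1 : 1 ≤ x := by
          have := cuts_subset (fun y hy => hJ y (List.mem_cons_of_mem _ hy)) hx
          exact (Finset.mem_Icc.1 this).1
        have hxj : x + j ∈ cuts L := by
          apply hsub
          rw [cuts_cons]
          exact Finset.mem_insert_of_mem (Finset.mem_image.2 ⟨x, hx, rfl⟩)
        rw [← hLapp, cuts_append] at hxj
        rcases Finset.mem_union.1 hxj with hmem | hmem
        · exfalso
          have := (Finset.mem_Icc.1 (cuts_subset hL₁pos hmem)).2
          rw [hL₁sum] at this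
          omega
        · rcases Finset.mem_image.1 hmem with ⟨y, hy, hyx⟩
          have : y = x := by rw [hL₁sum] at hyx; omega
          rwa [← this]
      rcases ih L₂ (fun x hx => hJ x (by simp [hx])) hL₂pos hsum2 hsub2 with ⟨P', hP'ne, hflat, hmap⟩
      refine ⟨L₁ :: P', ?_, ?_, ?_⟩
      · intro p hp
        rcases List.mem_cons.1 hp with rfl | hp
        · exact hL₁ne
        · exact hP'ne p hp
      · rw [List.flatten_cons, hflat, hLapp]
      · rw [List.map_cons, hmap, hL₁sum]

lemma sum_Icc_one_reindex {M : Type*} [AddCommMonoid M] (n : ℕ) (f : ℕ → M) :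
    ∑ k ∈ Finset.Icc 1 (n+1), f k = ∑ j ∈ Finset.range (n+1), f (n+1-j) := by
  refine Finset.sum_nbij' (i := fun k => n+1-k) (j := fun j => n+1-j) ?_ ?_ ?_ ?_ ?_
  · intro k hk; rw [Finset.mem_Icc] at hk; rw [Finset.mem_range]; omega
  · intro j hj; rw [Finset.mem_range] at hj; rw [Finset.mem_Icc]; omega
  · intro k hk; rw [Finset.mem_Icc] at hk; omega
  · intro j hj; rw [Finset.mem_range] at hj; omega
  · intro k hk; rw [Finset.mem_Icc] at hk
    congr 1
    omega


lemma G_lemma : ∀ n : ℕ, 1 ≤ n → ∀ A : Finset ℕ,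
    (∑ J ∈ comps n, if cuts J ⊆ A then ((-1:ℚ))^J.length else 0)
      = if n ∈ A ∧ (A ∩ Finset.Ioo 0 n) = ∅ then -1 else 0 := by
  intro n
  induction n using Nat.strong_induction_on with
  | _ n IH =>
  intro hn A
  obtain ⟨m, rfl⟩ : ∃ m, n = m + 1 := ⟨n - 1, by omega⟩
  rw [sum_comps_snoc]
  by_cases hA : m + 1 ∈ A
  · -- rewrite each term
    have hstep : ∀ k ∈ Finset.Icc 1 (m+1), ∀ J ∈ comps (m+1-k),
        (if cuts (J ++ [k]) ⊆ A then ((-1:ℚ))^(J ++ [k]).length else 0)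
          = if cuts J ⊆ A then -((-1:ℚ))^J.length else 0 := by
      intro k hk J hJ
      rw [Finset.mem_Icc] at hk
      have hsumJ : J.sum = m + 1 - k := (mem_comps.1 hJ).2
      have hcuts : cuts (J ++ [k]) = insert (m+1) (cuts J) := by
        rw [cuts_snoc, hsumJ]
        congr 1
        omega
      rw [hcuts]
      have hcond : insert (m+1) (cuts J) ⊆ A ↔ cuts J ⊆ A := by
        rw [Finset.insert_subset_iff]
        tauto
      have hlen : (J ++ [k]).length = J.length + 1 := by simp
      rw [hlen, pow_succ]
      by_cases hc : cuts J ⊆ A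
      · rw [if_pos (hcond.2 hc), if_pos hc]; ring
      · rw [if_neg (fun h => hc (hcond.1 h)), if_neg hc]
    rw [Finset.sum_congr rfl (fun k hk => Finset.sum_congr rfl (hstep k hk))]
    have key : ∀ j : ℕ, j ≤ m →
        (∑ J ∈ comps j, if cuts J ⊆ A then -((-1:ℚ))^J.length else 0)
          = if j = 0 then -1 else (if j ∈ A ∧ (A ∩ Finset.Ioo 0 j) = ∅ then 1 else 0) := by
      intro j hj
      rcases Nat.eq_zero_or_pos j with rfl | hjpos
      · rw [comps_zero]
        simp [cuts_nil]
      · rw [if_neg (by omega)]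
        have : (∑ J ∈ comps j, if cuts J ⊆ A then -((-1:ℚ))^J.length else 0)
            = -∑ J ∈ comps j, if cuts J ⊆ A then ((-1:ℚ))^J.length else 0 := by
          rw [← Finset.sum_neg_distrib]
          refine Finset.sum_congr rfl fun J _ => ?_
          by_cases hc : cuts J ⊆ A <;> simp [hc]
        rw [this, IH j (by omega) hjpos A]
        by_cases hc : j ∈ A ∧ (A ∩ Finset.Ioo 0 j) = ∅ <;> simp [hc]
    have hinner : ∀ k ∈ Finset.Icc 1 (m+1),
        (∑ J ∈ comps (m+1-k), if cuts J ⊆ A then -((-1:ℚ))^J.length else 0)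
          = (fun j => if j = 0 then (-1:ℚ) else (if j ∈ A ∧ (A ∩ Finset.Ioo 0 j) = ∅ then 1 else 0)) (m+1-k) := by
      intro k hk
      rw [Finset.mem_Icc] at hk
      exact key (m+1-k) (by omega)
    rw [Finset.sum_congr rfl hinner, sum_Icc_one_reindex]
    have hsplit : ∀ j ∈ Finset.range (m+1), (fun j => if j = 0 then (-1:ℚ) else (if j ∈ A ∧ (A ∩ Finset.Ioo 0 j) = ∅ then 1 else 0)) (m+1-(m+1-j)) = (fun j => if j = 0 then (-1:ℚ) else (if j ∈ A ∧ (A ∩ Finset.Ioo 0 j) = ∅ then 1 else 0)) j := by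
      intro j hj
      rw [Finset.mem_range] at hj
      congr 1
      omega
    rw [Finset.sum_congr rfl hsplit]
    have hsum1 : (∑ j ∈ Finset.Ico 1 (m+1),
        (fun j => if j = 0 then (-1:ℚ) else (if j ∈ A ∧ (A ∩ Finset.Ioo 0 j) = ∅ then 1 else 0)) j)
          = if (A ∩ Finset.Ioo 0 (m+1)) = ∅ then 0 else 1 := by
      by_cases hB : (A ∩ Finset.Ioo 0 (m+1)) = ∅
      · rw [if_pos hB]
        refine Finset.sum_eq_zero fun j hj => ?_
        rw [Finset.mem_Ico] at hj
        rw [if_neg (by omega), if_neg]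
        rintro ⟨hjA, -⟩
        have : j ∈ A ∩ Finset.Ioo 0 (m+1) := by
          rw [Finset.mem_inter, Finset.mem_Ioo]
          exact ⟨hjA, by omega, by omega⟩
        rw [hB] at this
        exact absurd this (Finset.notMem_empty _)
      · rw [if_neg hB]
        have hne : (A ∩ Finset.Ioo 0 (m+1)).Nonempty := Finset.nonempty_iff_ne_empty.2 hB
        set j₀ := (A ∩ Finset.Ioo 0 (m+1)).min' hne with hj₀
        have hj₀mem := Finset.min'_mem _ hne
        rw [Finset.mem_inter, Finset.mem_Ioo] at hj₀mem
        rw [Finset.sum_eq_single j₀]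
        · rw [if_neg (by omega), if_pos]
          refine ⟨hj₀mem.1, ?_⟩
          rw [Finset.eq_empty_iff_forall_notMem]
          intro x hx
          rw [Finset.mem_inter, Finset.mem_Ioo] at hx
          have hxB : x ∈ A ∩ Finset.Ioo 0 (m+1) := by
            rw [Finset.mem_inter, Finset.mem_Ioo]
            exact ⟨hx.1, hx.2.1, by omega⟩
          have := Finset.min'_le _ x hxB
          omega
        · intro j hj hjne
          rw [Finset.mem_Ico] at hj
          rw [if_neg (by omega), if_neg]
          rintro ⟨hjA, hempty⟩
          have hjB : j ∈ A ∩ Finset.Ioo 0 (m+1) := by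
            rw [Finset.mem_inter, Finset.mem_Ioo]
            exact ⟨hjA, by omega, by omega⟩
          have hle := Finset.min'_le _ j hjB
          have : j₀ ∈ A ∩ Finset.Ioo 0 j := by
            rw [Finset.mem_inter, Finset.mem_Ioo]
            refine ⟨hj₀mem.1, hj₀mem.2.1, ?_⟩
            rcases lt_or_eq_of_le hle with h | h
            · exact h
            · exact absurd h.symm hjne
          rw [hempty] at this
          exact absurd this (Finset.notMem_empty _)
        · intro hcon
          exfalso
          exact hcon (Finset.mem_Ico.2 ⟨by omega, by omega⟩)
    have hIco : (∑ j ∈ Finset.range (m+1), (fun j => if j = 0 then (-1:ℚ) else (if j ∈ A ∧ (A ∩ Finset.Ioo 0 j) = ∅ then 1 else 0)) j)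
        = -1 + ∑ j ∈ Finset.Ico 1 (m+1), (fun j => if j = 0 then (-1:ℚ) else (if j ∈ A ∧ (A ∩ Finset.Ioo 0 j) = ∅ then 1 else 0)) j := by
      rw [Finset.range_eq_Ico, Finset.sum_eq_sum_Ico_succ_bot (by omega : (0:ℕ) < m+1)]
      norm_num
    rw [hIco, hsum1]
    by_cases hB : (A ∩ Finset.Ioo 0 (m+1)) = ∅
    · rw [if_pos hB, if_pos ⟨hA, hB⟩]; norm_num
    · rw [if_neg hB, if_neg (fun hc => hB hc.2)]; norm_num
  · rw [if_neg (by tauto)]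
    refine Finset.sum_eq_zero fun k hk => Finset.sum_eq_zero fun J hJ => ?_
    rw [Finset.mem_Icc] at hk
    rw [if_neg]
    intro hcon
    apply hA
    apply hcon
    rw [cuts_snoc]
    have hsumJ : J.sum = m + 1 - k := (mem_comps.1 hJ).2
    have : J.sum + k = m + 1 := by omega
    rw [this]
    exact Finset.mem_insert_self _ _


def Hf (F : Finset ℕ) : ℕ → ℚ
  | 0 => 1
  | 1 => if 1 ∈ F then 0 else -2
  | (m+2) => if m+2 ∈ F then 0 else -2 * Hf F (m+1) - Hf F m

lemma Hf_mem {F : Finset ℕ} {m : ℕ} (hm : 1 ≤ m) (h : m ∈ F) : Hf F m = 0 := by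
  match m with
  | 1 => simp [Hf, h]
  | (m+2) => simp [Hf, h]

lemma neg_one_pow_eq_of_mod {a b : ℕ} (h : a % 2 = b % 2) : ((-1:ℚ))^a = (-1)^b := by
  conv_lhs => rw [← Nat.div_add_mod a 2]
  conv_rhs => rw [← Nat.div_add_mod b 2]
  rw [pow_add, pow_add, pow_mul, pow_mul, h]
  norm_num

lemma Hf_congr {F F' : Finset ℕ} : ∀ m, (∀ j, j ≤ m → (j ∈ F ↔ j ∈ F')) → Hf F m = Hf F' m := by
  intro m
  induction m using Nat.strong_induction_on with
  | _ m IH =>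
  intro h
  match m with
  | 0 => rfl
  | 1 =>
    show (if 1 ∈ F then (0:ℚ) else -2) = (if 1 ∈ F' then 0 else -2)
    rw [if_congr (h 1 le_rfl) rfl rfl]
  | (m+2) =>
    show (if m+2 ∈ F then (0:ℚ) else -2 * Hf F (m+1) - Hf F m)
        = (if m+2 ∈ F' then 0 else -2 * Hf F' (m+1) - Hf F' m)
    rw [IH (m+1) (by omega) (fun j hj => h j (by omega)),
      IH m (by omega) (fun j hj => h j (by omega)),
      if_congr (h (m+2) le_rfl) rfl rfl]

lemma Hf_free {F : Finset ℕ} : ∀ m, (∀ j, j ≤ m → j ∉ F) → Hf F m = (-1)^m * ((m : ℚ) + 1) := by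
  intro m
  induction m using Nat.strong_induction_on with
  | _ m IH =>
  intro h
  match m with
  | 0 => norm_num [Hf]
  | 1 =>
    show (if 1 ∈ F then (0:ℚ) else -2) = _
    rw [if_neg (h 1 le_rfl)]
    norm_num
  | (m+2) =>
    show (if m+2 ∈ F then (0:ℚ) else -2 * Hf F (m+1) - Hf F m) = _
    rw [if_neg (h (m+2) le_rfl), IH (m+1) (by omega) (fun j hj => h j (by omega)),
      IH m (by omega) (fun j hj => h j (by omega))]
    push_cast
    rw [pow_succ, pow_succ]
    ring

lemma Hf_seg (F : Finset ℕ) (s : ℕ) (hs : s ∈ F) (h1 : 1 ≤ s) :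
    ∀ i, (∀ j, 1 ≤ j → j ≤ i + 1 → s + j ∉ F) →
      Hf F (s+1+i) = (-1)^i * ((i:ℚ)+1) * Hf F (s+1) := by
  intro i
  induction i using Nat.strong_induction_on with
  | _ i IH =>
  intro h
  match i with
  | 0 => norm_num
  | 1 =>
    have harm : s+1+1 = (s-1)+2 + 1 := by omega
    have : Hf F (s+1+1) = if s+2 ∈ F then (0:ℚ) else -2 * Hf F (s+1) - Hf F s := by
      have hs2 : s+1+1 = s+2 := by omega
      rw [hs2]
      show Hf F (s+2) = _
      have : s + 2 = (s : ℕ) + 2 := rfl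
      rfl
    rw [this, if_neg (h 2 (by omega) (by omega)), Hf_mem h1 hs]
    norm_num
  | (i+2) =>
    have hidx : s+1+(i+2) = (s+1+i)+2 := by omega
    rw [hidx]
    show (if (s+1+i)+2 ∈ F then (0:ℚ) else -2 * Hf F ((s+1+i)+1) - Hf F (s+1+i)) = _
    have h1' : (s+1+i)+1 = s+1+(i+1) := by omega
    rw [if_neg (by
        have := h (i+3) (by omega) (by omega)
        intro hcon
        apply this
        have : (s+1+i)+2 = s + (i+3) := by omega
        rwa [this] at hcon),
      h1', IH (i+1) (by omega) (fun j hj1 hj2 => h j hj1 (by omega)),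
      IH i (by omega) (fun j hj1 hj2 => h j hj1 (by omega))]
    push_cast
    rw [pow_succ, pow_succ]
    ring

def Dfun (L : List ℕ) : ℚ := ((L.headI * ((L.tail).map (fun i => i - 1)).prod : ℕ) : ℚ)

lemma Dfun_single (k : ℕ) : Dfun [k] = (k : ℚ) := by simp [Dfun]

lemma Dfun_snoc {M : List ℕ} (hM : M ≠ []) (k : ℕ) :
    Dfun (M ++ [k]) = Dfun M * ((k - 1 : ℕ) : ℚ) := by
  cases M with
  | nil => exact absurd rfl hM
  | cons x t =>
    show Dfun (x :: (t ++ [k])) = _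
    unfold Dfun
    simp only [List.headI, List.tail, List.map_append, List.prod_append, List.map_cons,
      List.map_nil, List.prod_cons, List.prod_nil]
    push_cast
    ring

lemma INV : ∀ L : List ℕ, L ≠ [] → (∀ x ∈ L, 0 < x) →
    Hf (cuts L) (L.sum - 1) = (-1)^(L.sum + L.length) * Dfun L := by
  intro L
  induction L using List.reverseRecOn with
  | nil => intro h; exact absurd rfl h
  | append_singleton M k ih =>
  intro _ hpos
  have hk : 1 ≤ k := hpos k (by simp)
  by_cases hM : M = []
  · subst hM
    simp only [List.nil_append, List.sum_cons, List.sum_nil, List.length_cons, List.length_nil,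
      add_zero]
    rw [cuts_singleton, Hf_free (k-1) (fun j hj => by
      rw [Finset.mem_singleton]; omega), Dfun_single]
    have hc : ((k - 1 : ℕ) : ℚ) + 1 = (k : ℚ) := by
      rw [Nat.cast_sub hk]
      ring
    rw [hc]
    congr 1
    exact neg_one_pow_eq_of_mod (by omega)
  · have hMpos : ∀ x ∈ M, 0 < x := fun x hx => hpos x (by simp [hx])
    set S := M.sum with hSdef
    have hS : 1 ≤ S := pos_sum_pos hMpos hM
    have hSc : S ∈ cuts M := sum_mem_cuts hM
    have hcuts : cuts (M ++ [k]) = insert (S + k) (cuts M) := cuts_snoc M k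
    have hcong : ∀ m, m ≤ S → Hf (cuts (M ++ [k])) m = Hf (cuts M) m := by
      intro m hm
      rw [hcuts]
      refine Hf_congr m fun j hj => ?_
      rw [Finset.mem_insert]
      constructor
      · rintro (rfl | h)
        · omega
        · exact h
      · intro h; exact Or.inr h
    have hsum : (M ++ [k]).sum = S + k := by simp [hSdef]
    have hlen : (M ++ [k]).length = M.length + 1 := by simp
    have hIH := ih hM hMpos
    by_cases hk1 : k = 1
    · subst hk1
      rw [hsum, hlen]
      have : S + 1 - 1 = S := by omega
      rw [this, Hf_mem hS (by rw [hcuts]; exact Finset.mem_insert_of_mem hSc),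
        Dfun_snoc hM]
      norm_num
    · -- k ≥ 2
      have hk2 : 2 ≤ k := by omega
      have hnotmem : ∀ j, 1 ≤ j → j ≤ k - 1 → S + j ∉ cuts (M ++ [k]) := by
        intro j hj1 hj2 hcon
        rw [hcuts, Finset.mem_insert] at hcon
        rcases hcon with h | h
        · omega
        · have := (Finset.mem_Icc.1 (cuts_subset hMpos h)).2
          omega
      have hSK : S + k ∈ cuts (M ++ [k]) := by
        rw [hcuts]; exact Finset.mem_insert_self _ _
      have hSmem : S ∈ cuts (M ++ [k]) := by
        rw [hcuts]; exact Finset.mem_insert_of_mem hSc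
      have hstep1 : Hf (cuts (M ++ [k])) (S+1) = -Hf (cuts M) (S-1) := by
        have harm : S + 1 = (S-1) + 2 := by omega
        rw [harm]
        show (if (S-1)+2 ∈ cuts (M ++ [k]) then (0:ℚ)
            else -2 * Hf (cuts (M ++ [k])) ((S-1)+1) - Hf (cuts (M ++ [k])) (S-1)) = _
        have h11 : (S-1)+1 = S := by omega
        have h12 : (S-1)+2 = S+1 := by omega
        rw [if_neg (by rw [h12]; exact hnotmem 1 le_rfl (by omega)), h11,
          Hf_mem hS hSmem, hcong (S-1) (by omega)]
        ring
      have hseg := Hf_seg (cuts (M ++ [k])) S hSmem hS (k-2) (fun j hj1 hj2 => hnotmem j hj1 (by omega))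
      have hidx : S + 1 + (k-2) = S + k - 1 := by omega
      rw [hidx] at hseg
      rw [hsum, hlen, hseg, hstep1, hIH, Dfun_snoc hM]
      have hc : ((k-2 : ℕ) : ℚ) + 1 = ((k-1 : ℕ) : ℚ) := by
        push_cast [show (1:ℕ) ≤ k - 1 by omega]
        have : ((k-2:ℕ):ℚ) = (k:ℚ) - 2 := by push_cast [hk2]; ring
        rw [this]
        have : ((k-1:ℕ):ℚ) = (k:ℚ) - 1 := by push_cast [hk]; ring
        rw [this]
        ring
      rw [hc]
      have hsign : ((-1:ℚ))^(k-2) * (-(-1:ℚ)^(S + M.length)) = (-1)^(S + k + (M.length + 1)) := by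
        have h2 : -(-1:ℚ)^(S + M.length) = (-1)^(S + M.length + 1) := by
          rw [pow_succ]; ring
        rw [h2, ← pow_add]
        exact neg_one_pow_eq_of_mod (by omega)
      calc ((-1:ℚ))^(k-2) * (((k-1:ℕ):ℚ)) * (-((-1:ℚ)^(S + M.length) * Dfun M))
          = (((-1:ℚ))^(k-2) * (-(-1:ℚ)^(S + M.length))) * (Dfun M * ((k-1:ℕ):ℚ)) := by ring
        _ = (-1:ℚ)^(S + k + (M.length + 1)) * (Dfun M * ((k-1:ℕ):ℚ)) := by rw [hsign]


lemma insert_inter_empty_iff {a : ℕ} {s F : Finset ℕ} :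
    (insert a s ∩ F = ∅) ↔ (a ∉ F ∧ s ∩ F = ∅) := by
  simp only [Finset.eq_empty_iff_forall_notMem, Finset.mem_inter, Finset.mem_insert]
  constructor
  · intro h
    refine ⟨fun ha => h a ⟨Or.inl rfl, ha⟩, fun x hx => h x ⟨Or.inr hx.1, hx.2⟩⟩
  · rintro ⟨h1, h2⟩ x ⟨hx1 | hx2, hxF⟩
    · exact h1 (hx1 ▸ hxF)
    · exact h2 x ⟨hx2, hxF⟩

lemma sum_Icc_two {M : Type*} [AddCommMonoid M] (n : ℕ) (h2 : 2 ≤ n) (f : ℕ → M)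
    (hf : ∀ k, k ∈ Finset.Icc 1 n → 3 ≤ k → f k = 0) :
    ∑ k ∈ Finset.Icc 1 n, f k = f 1 + f 2 := by
  rw [← Finset.sum_subset (show ({1, 2} : Finset ℕ) ⊆ Finset.Icc 1 n by
      intro x hx
      rcases Finset.mem_insert.1 hx with rfl | hx
      · rw [Finset.mem_Icc]; omega
      · rw [Finset.mem_singleton] at hx; subst hx; rw [Finset.mem_Icc]; omega)
    (fun x hx hnx => hf x hx (by
      rcases Finset.mem_Icc.1 hx with ⟨h1, _⟩
      by_contra hcon
      apply hnx
      have : x = 1 ∨ x = 2 := by omega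
      rcases this with rfl | rfl
      · exact Finset.mem_insert_self _ _
      · exact Finset.mem_insert_of_mem (Finset.mem_singleton_self _)))]
  rw [Finset.sum_pair (by norm_num : (1:ℕ) ≠ 2)]

lemma W_lemma (F : Finset ℕ) : ∀ m : ℕ,
    (∑ I ∈ comps m, if ((∀ x ∈ I, x = 1 ∨ x = 2) ∧ cuts I ∩ F = ∅)
        then ((-1:ℚ))^I.length * 2^(I.count 1) else 0) = Hf F m := by
  intro m
  induction m using Nat.strong_induction_on with
  | _ m IH =>
  match m with
  | 0 =>
    rw [comps_zero]
    simp [cuts_nil, Hf]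
  | (m+1) =>
  by_cases hF : m + 1 ∈ F
  · rw [Hf_mem (by omega) hF, sum_comps_snoc]
    refine Finset.sum_eq_zero fun k hk => Finset.sum_eq_zero fun J hJ => ?_
    rw [Finset.mem_Icc] at hk
    rw [if_neg]
    rintro ⟨-, hcon⟩
    have hcuts : cuts (J ++ [k]) = insert (m+1) (cuts J) := by
      rw [cuts_snoc, (mem_comps.1 hJ).2]
      congr 1
      omega
    rw [hcuts, insert_inter_empty_iff] at hcon
    exact hcon.1 hF
  · rw [sum_comps_snoc]
    have hstep : ∀ k ∈ Finset.Icc 1 (m+1), ∀ J ∈ comps (m+1-k),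
        (if ((∀ x ∈ J ++ [k], x = 1 ∨ x = 2) ∧ cuts (J ++ [k]) ∩ F = ∅)
          then ((-1:ℚ))^(J ++ [k]).length * 2^((J ++ [k]).count 1) else 0)
        = (if k = 1 then (-2:ℚ) else if k = 2 then -1 else 0) *
            (if ((∀ x ∈ J, x = 1 ∨ x = 2) ∧ cuts J ∩ F = ∅)
              then ((-1:ℚ))^J.length * 2^(J.count 1) else 0) := by
      intro k hk J hJ
      rw [Finset.mem_Icc] at hk
      have hcuts : cuts (J ++ [k]) = insert (m+1) (cuts J) := by
        rw [cuts_snoc, (mem_comps.1 hJ).2]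
        congr 1
        omega
      have hcond : ((∀ x ∈ J ++ [k], x = 1 ∨ x = 2) ∧ cuts (J ++ [k]) ∩ F = ∅)
          ↔ ((k = 1 ∨ k = 2) ∧ ((∀ x ∈ J, x = 1 ∨ x = 2) ∧ cuts J ∩ F = ∅)) := by
        rw [hcuts, insert_inter_empty_iff, List.forall_mem_append]
        constructor
        · rintro ⟨⟨hJ12, hk12⟩, -, hJF⟩
          exact ⟨hk12 k (by simp), hJ12, hJF⟩
        · rintro ⟨hk12, hJ12, hJF⟩
          exact ⟨⟨hJ12, fun x hx => by rw [List.mem_singleton] at hx; subst hx; exact hk12⟩,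
            hF, hJF⟩
      have hlen : (J ++ [k]).length = J.length + 1 := by simp
      have hcount : (J ++ [k]).count 1 = J.count 1 + (if k = 1 then 1 else 0) := by
        rw [List.count_append]
        congr 1
        by_cases hk1 : k = 1
        · subst hk1; simp
        · simp [List.count_singleton]
      by_cases hc : ((∀ x ∈ J, x = 1 ∨ x = 2) ∧ cuts J ∩ F = ∅)
      · by_cases hk1 : k = 1
        · subst hk1
          rw [if_pos (hcond.2 ⟨Or.inl rfl, hc⟩), if_pos hc, hlen, hcount]
          norm_num [pow_succ]
          ring
        · by_cases hk2 : k = 2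
          · subst hk2
            rw [if_pos (hcond.2 ⟨Or.inr rfl, hc⟩), if_pos hc, hlen, hcount]
            norm_num [pow_succ]
          · rw [if_neg (fun h => by rcases (hcond.1 h).1 with h' | h' <;> omega),
              if_neg hk1, if_neg hk2]
            ring
      · rw [if_neg (fun h => hc (hcond.1 h).2), if_neg hc]
        ring
    rw [Finset.sum_congr rfl (fun k hk => Finset.sum_congr rfl (hstep k hk))]
    have hpull : ∀ k ∈ Finset.Icc 1 (m+1),
        (∑ J ∈ comps (m+1-k), (if k = 1 then (-2:ℚ) else if k = 2 then -1 else 0) *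
          (if ((∀ x ∈ J, x = 1 ∨ x = 2) ∧ cuts J ∩ F = ∅)
            then ((-1:ℚ))^J.length * 2^(J.count 1) else 0))
          = (if k = 1 then (-2:ℚ) else if k = 2 then -1 else 0) * Hf F (m+1-k) := by
      intro k hk
      rw [← Finset.mul_sum]
      congr 1
      exact IH (m+1-k) (by rw [Finset.mem_Icc] at hk; omega)
    rw [Finset.sum_congr rfl hpull]
    rcases Nat.eq_zero_or_pos m with rfl | hm
    · rw [Finset.Icc_self, Finset.sum_singleton]
      simp only [if_pos rfl]
      show (-2:ℚ) * Hf F (0+1-1) = Hf F 1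
      show (-2:ℚ) * 1 = (if 1 ∈ F then (0:ℚ) else -2)
      rw [if_neg (by simpa using hF)]
      ring
    · rw [sum_Icc_two (m+1) (by omega) _ (fun k hk h3 => by
        rw [if_neg (by omega), if_neg (by omega), zero_mul])]
      rw [if_pos rfl, if_neg (by norm_num : ¬(2:ℕ) = 1), if_pos rfl]
      have h1 : m + 1 - 1 = m := by omega
      have h2 : m + 1 - 2 = m - 1 := by omega
      rw [h1, h2]
      have harm : m + 1 = (m-1) + 2 := by omega
      rw [harm] at hF ⊢
      show _ = (if (m-1)+2 ∈ F then (0:ℚ) else -2 * Hf F ((m-1)+1) - Hf F (m-1))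
      rw [if_neg hF, (show (m-1)+1 = m by omega)]
      ring


lemma C_lemma (n : ℕ) (hn : 1 ≤ n) (F : Finset ℕ) :
    (∑ I ∈ comps n, if ((∀ x ∈ I, x = 1 ∨ x = 2) ∧ I.getLast? = some 1 ∧
          (cuts I ∩ F ∩ Finset.Ioo 0 n) = ∅)
        then ((-1:ℚ))^I.length * 2^(I.count 1) else 0)
      = -2 * Hf (F ∩ Finset.Ioo 0 n) (n - 1) := by
  obtain ⟨m, rfl⟩ : ∃ m, n = m+1 := ⟨n-1, by omega⟩
  rw [sum_comps_snoc]
  have hstep : ∀ k ∈ Finset.Icc 1 (m+1), ∀ J ∈ comps (m+1-k),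
      (if ((∀ x ∈ J ++ [k], x = 1 ∨ x = 2) ∧ (J ++ [k]).getLast? = some 1 ∧
          (cuts (J ++ [k]) ∩ F ∩ Finset.Ioo 0 (m+1)) = ∅)
        then ((-1:ℚ))^(J ++ [k]).length * 2^((J ++ [k]).count 1) else 0)
      = (if k = 1 then (-2:ℚ) else 0) *
          (if ((∀ x ∈ J, x = 1 ∨ x = 2) ∧ cuts J ∩ (F ∩ Finset.Ioo 0 (m+1)) = ∅)
            then ((-1:ℚ))^J.length * 2^(J.count 1) else 0) := by
    intro k hk J hJ
    rw [Finset.mem_Icc] at hk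
    have hJm := mem_comps.1 hJ
    have hlast : (J ++ [k]).getLast? = some k := List.getLast?_concat
    by_cases hk1 : k = 1
    · subst hk1
      have hcuts : cuts (J ++ [1]) = insert (m+1) (cuts J) := by
        rw [cuts_snoc, hJm.2]
        congr 1
      have hJsub : cuts J ⊆ Finset.Icc 1 (m+1-1) := by
        have := cuts_subset hJm.1
        rwa [hJm.2] at this
      have hsetEq : cuts (J ++ [1]) ∩ F ∩ Finset.Ioo 0 (m+1)
          = cuts J ∩ (F ∩ Finset.Ioo 0 (m+1)) := by
        rw [hcuts]; ext x
        simp only [Finset.mem_inter, Finset.mem_insert, Finset.mem_Ioo]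
        constructor
        · rintro ⟨⟨(rfl | hx), hxF⟩, h0, hlt⟩
          · omega
          · exact ⟨hx, hxF, h0, hlt⟩
        · rintro ⟨hx, hxF, h0, hlt⟩
          exact ⟨⟨Or.inr hx, hxF⟩, h0, hlt⟩
      have hcond : ((∀ x ∈ J ++ [1], x = 1 ∨ x = 2) ∧ (J ++ [1]).getLast? = some 1 ∧
            (cuts (J ++ [1]) ∩ F ∩ Finset.Ioo 0 (m+1)) = ∅)
          ↔ ((∀ x ∈ J, x = 1 ∨ x = 2) ∧ cuts J ∩ (F ∩ Finset.Ioo 0 (m+1)) = ∅) := by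
        rw [hsetEq, List.forall_mem_append]
        constructor
        · rintro ⟨⟨hJ12, -⟩, -, hC⟩; exact ⟨hJ12, hC⟩
        · rintro ⟨hJ12, hC⟩
          exact ⟨⟨hJ12, by simp⟩, hlast, hC⟩
      have hlen : (J ++ [1]).length = J.length + 1 := by simp
      have hcount : (J ++ [1]).count 1 = J.count 1 + 1 := by
        rw [List.count_append]; simp
      by_cases hc : ((∀ x ∈ J, x = 1 ∨ x = 2) ∧ cuts J ∩ (F ∩ Finset.Ioo 0 (m+1)) = ∅)
      · rw [if_pos (hcond.2 hc), if_pos hc, hlen, hcount]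
        norm_num [pow_succ]
        ring
      · rw [if_neg (fun h => hc (hcond.1 h)), if_neg hc]; ring
    · rw [if_neg, if_neg hk1, zero_mul]
      rintro ⟨-, hL, -⟩
      rw [hlast] at hL
      exact hk1 (Option.some.inj hL)
  rw [Finset.sum_congr rfl (fun k hk => Finset.sum_congr rfl (hstep k hk))]
  have hpull : ∀ k ∈ Finset.Icc 1 (m+1),
      (∑ J ∈ comps (m+1-k), (if k = 1 then (-2:ℚ) else 0) *
          (if ((∀ x ∈ J, x = 1 ∨ x = 2) ∧ cuts J ∩ (F ∩ Finset.Ioo 0 (m+1)) = ∅)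
            then ((-1:ℚ))^J.length * 2^(J.count 1) else 0))
        = (if k = 1 then (-2:ℚ) * Hf (F ∩ Finset.Ioo 0 (m+1)) (m+1-1) else 0) := by
    intro k hk
    rw [← Finset.mul_sum]
    by_cases hk1 : k = 1
    · subst hk1
      rw [if_pos rfl, if_pos rfl]
      try rw [W_lemma]
    · rw [if_neg hk1, if_neg hk1, zero_mul]
  rw [Finset.sum_congr rfl hpull, Finset.sum_ite_eq' (Finset.Icc 1 (m+1)) 1
    (fun _ => (-2:ℚ) * Hf (F ∩ Finset.Ioo 0 (m+1)) (m+1-1)),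
    if_pos (Finset.mem_Icc.2 ⟨le_rfl, by omega⟩)]

/-- products of `Lam`'s over a list -/
abbrev LamL (L : List ℕ) : NSym := (L.map Lam).prod

abbrev ScL (L : List ℕ) : NSym := (L.map Sc).prod

lemma LamL_append (A B : List ℕ) : LamL (A ++ B) = LamL A * LamL B := by
  simp [LamL]

lemma ScL_append (A B : List ℕ) : ScL (A ++ B) = ScL A * ScL B := by
  simp [ScL]

lemma sum_range_shift {M : Type*} [AddCommMonoid M] (n : ℕ) (f : ℕ → M) :
    ∑ k ∈ Finset.range n, f (k+1) = ∑ k ∈ Finset.Icc 1 n, f k := by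
  refine Finset.sum_nbij' (i := fun k => k+1) (j := fun k => k-1) ?_ ?_ ?_ ?_ ?_
  · intro k hk; rw [Finset.mem_range] at hk; rw [Finset.mem_Icc]; omega
  · intro k hk; rw [Finset.mem_Icc] at hk; rw [Finset.mem_range]; omega
  · intro k hk; omega
  · intro k hk; rw [Finset.mem_Icc] at hk; omega
  · intro k hk; rfl

lemma Sc_expand : ∀ m : ℕ, Sc m = ∑ L ∈ comps m, ((-1:ℚ)^m * (-1)^L.length) • LamL L := by
  intro m
  induction m using Nat.strong_induction_on with
  | _ m IH =>
  match m with
  | 0 =>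
    rw [comps_zero]
    show Sc 0 = _
    rw [Sc]
    simp [LamL]
  | (m+1) =>
    rw [Sc, sum_comps_cons]
    have hstep : ∀ k ∈ Finset.range (m+1),
        ((-1:ℚ) ^ k) • (Lam (k + 1) * Sc (m - k))
          = ∑ J ∈ comps (m-k), ((-1:ℚ)^m * (-1)^(J.length)) • LamL ((k+1) :: J) := by
      intro k hk
      rw [Finset.mem_range] at hk
      rw [IH (m-k) (by omega), Finset.mul_sum, Finset.smul_sum]
      refine Finset.sum_congr rfl fun J hJ => ?_
      rw [mul_smul_comm, smul_smul]
      have : Lam (k+1) * LamL J = LamL ((k+1) :: J) := by simp [LamL]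
      rw [this]
      congr 1
      have h1 : ((-1:ℚ))^k * ((-1)^(m-k) * (-1)^J.length) = ((-1)^k * (-1)^(m-k)) * (-1)^J.length := by ring
      rw [h1, ← pow_add, ← pow_add, ← pow_add]
      refine neg_one_pow_eq_of_mod (by omega)
    rw [Finset.sum_congr rfl hstep]
    have hre := sum_range_shift (m+1) (fun k' => ∑ J ∈ comps (m+1-k'),
        ((-1:ℚ)^(m+1) * (-1)^((k' :: J).length)) • LamL (k' :: J))
    rw [← hre]
    refine Finset.sum_congr rfl fun k hk => ?_
    rw [Finset.mem_range] at hk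
    rw [show m + 1 - (k+1) = m - k by omega]
    refine Finset.sum_congr rfl fun J hJ => ?_
    congr 1
    rw [← pow_add, ← pow_add]
    refine neg_one_pow_eq_of_mod (by simp only [List.length_cons]; omega)


def splitA : ℕ → List ℕ → List ℕ × List ℕ
  | _, [] => ([], [])
  | a, (x :: xs) => if a ≤ x then ([x], xs) else ((x :: (splitA (a-x) xs).1), (splitA (a-x) xs).2)

lemma splitA_append : ∀ (L₁ L₂ : List ℕ), L₁ ≠ [] → (∀ x ∈ L₁, 0 < x) →
    splitA L₁.sum (L₁ ++ L₂) = (L₁, L₂) := by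
  intro L₁
  induction L₁ with
  | nil => intro L₂ h _; exact absurd rfl h
  | cons x t ih =>
    intro L₂ _ hpos
    by_cases ht : t = []
    · subst ht
      show splitA ([x].sum) (x :: L₂) = _
      rw [splitA]
      rw [if_pos (by simp)]
    · have hts : 0 < t.sum := pos_sum_pos (fun y hy => hpos y (by simp [hy])) ht
      show splitA ((x :: t).sum) (x :: (t ++ L₂)) = _
      rw [List.sum_cons, splitA, if_neg (by omega)]
      have harg : x + t.sum - x = t.sum := by omega
      rw [harg, ih L₂ ht (fun y hy => hpos y (by simp [hy]))]

lemma splitA_spec {L : List ℕ} {a : ℕ} (hpos : ∀ x ∈ L, 0 < x) (ha : a ∈ cuts L) :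
    (splitA a L).1 ++ (splitA a L).2 = L ∧ (splitA a L).1.sum = a ∧ (splitA a L).1 ≠ [] := by
  rcases Finset.mem_image.1 ha with ⟨i, hi, hEq⟩
  rw [Finset.mem_range] at hi
  have hne : L.take (i+1) ≠ [] := by
    intro hcon
    have := congrArg List.length hcon
    simp only [List.length_take, List.length_nil] at this
    omega
  have hkey : splitA a L = (L.take (i+1), L.drop (i+1)) := by
    conv_lhs => rw [← hEq, ← List.take_append_drop (i+1) L]
    rw [List.take_append, List.take_of_length_le (by rw [List.length_take]; omega),
      (show i + 1 - (L.take (i+1)).length = 0 by rw [List.length_take]; omega)]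
    simp only [List.take_zero, List.append_nil]
    exact splitA_append _ _ hne (fun y hy => hpos y (List.mem_of_mem_take hy))
  rw [hkey]
  exact ⟨List.take_append_drop _ _, hEq, hne⟩

lemma ScL_expand : ∀ (J : List ℕ), J ≠ [] → (∀ x ∈ J, 0 < x) →
    ScL J = ∑ L ∈ comps J.sum,
      (if cuts J ⊆ cuts L then ((-1:ℚ)^J.sum * (-1)^L.length) else 0) • LamL L := by
  intro J
  induction J using List.reverseRecOn with
  | nil => intro h; exact absurd rfl h
  | append_singleton M j ih =>
  intro _ hpos
  have hj : 1 ≤ j := hpos j (by simp)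
  by_cases hM : M = []
  · subst hM
    simp only [List.nil_append]
    have h1 : ScL [j] = Sc j := by simp [ScL]
    rw [h1, Sc_expand j]
    refine Finset.sum_congr rfl fun L hL => ?_
    have hsum : [j].sum = j := by simp
    rw [hsum, if_pos]
    rw [cuts_singleton, Finset.singleton_subset_iff]
    have := sum_mem_cuts (ne_nil_of_mem_comps hj hL)
    rwa [(mem_comps.1 hL).2] at this
  · have hMpos : ∀ x ∈ M, 0 < x := fun x hx => hpos x (by simp [hx])
    set a := M.sum with ha
    have haa : 1 ≤ a := pos_sum_pos hMpos hM
    have hsum : (M ++ [j]).sum = a + j := by simp [ha]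
    have hScL : ScL (M ++ [j]) = ScL M * Sc j := by
      rw [ScL_append]
      congr 1
      simp [ScL]
    rw [hScL, ih hM hMpos, Sc_expand j, Finset.sum_mul_sum]
    have hterm : ∀ L₁ ∈ comps a, ∀ L₂ ∈ comps j,
        ((if cuts M ⊆ cuts L₁ then ((-1:ℚ)^a * (-1)^L₁.length) else 0) • LamL L₁) *
          (((-1:ℚ)^j * (-1)^L₂.length) • LamL L₂)
        = (if a ∈ cuts (L₁ ++ L₂) then
            (if cuts (M ++ [j]) ⊆ cuts (L₁ ++ L₂)
              then ((-1:ℚ)^(M ++ [j]).sum * (-1)^(L₁ ++ L₂).length) else 0) • LamL (L₁ ++ L₂)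
            else 0) := by
      intro L₁ h₁ L₂ h₂
      obtain ⟨hp₁, hs₁⟩ := mem_comps.1 h₁
      obtain ⟨hp₂, hs₂⟩ := mem_comps.1 h₂
      have hL₁ne : L₁ ≠ [] := ne_nil_of_mem_comps haa h₁
      have hL₂ne : L₂ ≠ [] := ne_nil_of_mem_comps hj h₂
      have hacuts : a ∈ cuts (L₁ ++ L₂) := by
        rw [cuts_append]
        refine Finset.mem_union_left _ ?_
        have := sum_mem_cuts hL₁ne
        rwa [hs₁] at this
      rw [if_pos hacuts, smul_mul_assoc, mul_smul_comm, smul_smul]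
      have hiff : cuts (M ++ [j]) ⊆ cuts (L₁ ++ L₂) ↔ cuts M ⊆ cuts L₁ := by
        rw [cuts_snoc, ← ha]
        constructor
        · intro h x hx
          have hxa : x ≤ a := by
            have := (Finset.mem_Icc.1 (cuts_subset hMpos hx)).2
            omega
          have := h (Finset.mem_insert_of_mem hx)
          rw [cuts_append] at this
          rcases Finset.mem_union.1 this with h' | h'
          · exact h'
          · exfalso
            rcases Finset.mem_image.1 h' with ⟨y, hy, hyx⟩
            have : 1 ≤ y := (Finset.mem_Icc.1 (cuts_subset hp₂ hy)).1
            rw [hs₁] at hyx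
            omega
        · intro h
          rw [Finset.insert_subset_iff]
          constructor
          · rw [cuts_append]
            refine Finset.mem_union_right _ (Finset.mem_image.2 ⟨j, ?_, ?_⟩)
            · have := sum_mem_cuts hL₂ne
              rwa [hs₂] at this
            · rw [hs₁]
              omega
          · intro x hx
            rw [cuts_append]
            exact Finset.mem_union_left _ (h hx)
      by_cases hc : cuts M ⊆ cuts L₁
      · rw [if_pos hc, if_pos (hiff.2 hc), ← LamL_append]
        congr 1
        rw [hsum, List.length_append]
        have e1 : ((-1:ℚ)^a * (-1)^L₁.length) * ((-1)^j * (-1)^L₂.length)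
            = (-1:ℚ)^(a + L₁.length + j + L₂.length) := by
          rw [pow_add, pow_add, pow_add]; ring
        rw [e1, ← pow_add]
        refine neg_one_pow_eq_of_mod ?_
        have : a + j + (L₁.length + L₂.length) = a + L₁.length + j + L₂.length := by ring
        omega
      · rw [if_neg hc, if_neg (fun h => hc (hiff.1 h))]
        simp
    rw [Finset.sum_congr rfl (fun L₁ h₁ => Finset.sum_congr rfl (hterm L₁ h₁))]
    have htarget : ∀ L ∈ comps (M ++ [j]).sum,
        (if cuts (M ++ [j]) ⊆ cuts L then ((-1:ℚ)^(M ++ [j]).sum * (-1)^L.length) else 0) • LamL L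
        = (if a ∈ cuts L then
            (if cuts (M ++ [j]) ⊆ cuts L
              then ((-1:ℚ)^(M ++ [j]).sum * (-1)^L.length) else 0) • LamL L
            else 0) := by
      intro L hL
      by_cases hmem : a ∈ cuts L
      · rw [if_pos hmem]
      · rw [if_neg hmem, if_neg, zero_smul]
        intro hcon
        apply hmem
        apply hcon
        rw [cuts_snoc]
        exact Finset.mem_insert_of_mem (sum_mem_cuts hM)
    rw [Finset.sum_congr rfl htarget, ← Finset.sum_filter, ← Finset.sum_product']
    rw [hsum]
    refine Finset.sum_nbij' (i := fun p : List ℕ × List ℕ => p.1 ++ p.2)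
      (j := fun L => splitA a L) ?_ ?_ ?_ ?_ ?_
    · rintro ⟨L₁, L₂⟩ hp
      rw [Finset.mem_product] at hp
      obtain ⟨hp1, hp2⟩ := hp
      obtain ⟨hq1, hr1⟩ := mem_comps.1 hp1
      obtain ⟨hq2, hr2⟩ := mem_comps.1 hp2
      rw [Finset.mem_filter]
      constructor
      · rw [mem_comps]
        constructor
        · intro x hx
          rcases List.mem_append.1 hx with h | h
          · exact hq1 x h
          · exact hq2 x h
        · rw [List.sum_append, hr1, hr2]
      · rw [cuts_append]
        refine Finset.mem_union_left _ ?_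
        have := sum_mem_cuts (ne_nil_of_mem_comps haa hp1)
        rwa [hr1] at this
    · intro L hL
      rw [Finset.mem_filter] at hL
      obtain ⟨hL, hacuts⟩ := hL
      obtain ⟨hq, hr⟩ := mem_comps.1 hL
      obtain ⟨happ, hsume, hne⟩ := splitA_spec hq hacuts
      rw [Finset.mem_product]
      constructor
      · rw [mem_comps]
        refine ⟨fun x hx => hq x (by rw [← happ]; exact List.mem_append_left _ hx), hsume⟩
      · rw [mem_comps]
        refine ⟨fun x hx => hq x (by rw [← happ]; exact List.mem_append_right _ hx), ?_⟩
        have : (splitA a L).1.sum + (splitA a L).2.sum = L.sum := by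
          rw [← List.sum_append, happ]
        omega
    · rintro ⟨L₁, L₂⟩ hp
      rw [Finset.mem_product] at hp
      obtain ⟨hp1, hp2⟩ := hp
      obtain ⟨hq1, hr1⟩ := mem_comps.1 hp1
      dsimp only
      rw [← hr1]
      exact splitA_append L₁ L₂ (ne_nil_of_mem_comps haa hp1) hq1
    · intro L hL
      rw [Finset.mem_filter] at hL
      obtain ⟨hL, hacuts⟩ := hL
      exact (splitA_spec (mem_comps.1 hL).1 hacuts).1
    · rintro ⟨L₁, L₂⟩ hp
      rw [Finset.mem_product] at hp
      obtain ⟨hp1, hp2⟩ := hp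
      obtain ⟨hq1, hr1⟩ := mem_comps.1 hp1
      dsimp only
      rw [if_pos]
      rw [cuts_append]
      refine Finset.mem_union_left _ ?_
      have := sum_mem_cuts (ne_nil_of_mem_comps haa hp1)
      rwa [hr1] at this


lemma Rib_expand {n : ℕ} (hn : 1 ≤ n) (I : Composition n) :
    Rib I = ∑ L ∈ comps n,
      (if (cuts I.blocks ∩ cuts L ∩ Finset.Ioo 0 n) = ∅
        then -(((-1:ℚ))^(I.blocks.length) * ((-1)^n * (-1)^L.length)) else 0) • LamL L := by
  have hI : I.blocks ∈ comps n := Finset.mem_image.2 ⟨I, Finset.mem_univ _, rfl⟩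
  obtain ⟨hIpos, hIsum⟩ := mem_comps.1 hI
  have h0 : Rib I = ∑ J ∈ comps n,
      (if IsCoarsening I.blocks J then ((-1:ℚ)^(I.blocks.length - J.length)) • ScL J else 0) :=
    sum_comps (fun Jb =>
      if IsCoarsening I.blocks Jb then ((-1:ℚ)^(I.blocks.length - Jb.length)) • ScL Jb else 0)
  rw [h0]
  have hstep : ∀ J ∈ comps n,
      (if IsCoarsening I.blocks J then ((-1:ℚ)^(I.blocks.length - J.length)) • ScL J else 0)
        = ∑ L ∈ comps n, (if (cuts J ⊆ cuts I.blocks ∧ cuts J ⊆ cuts L)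
            then (((-1:ℚ)^(I.blocks.length) * (-1)^J.length) * ((-1)^n * (-1)^L.length)) else 0)
              • LamL L := by
    intro J hJ
    obtain ⟨hJpos, hJsum⟩ := mem_comps.1 hJ
    have hJne : J ≠ [] := ne_nil_of_mem_comps hn hJ
    by_cases hc : IsCoarsening I.blocks J
    · have hsub : cuts J ⊆ cuts I.blocks := by
        obtain ⟨P, hP1, hP2, hP3⟩ := hc
        rw [← hP2, ← hP3]
        exact cuts_subset_of_partition P hP1
      have hlen : J.length ≤ I.blocks.length := by
        rw [← card_cuts hJpos, ← card_cuts hIpos]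
        exact Finset.card_le_card hsub
      rw [if_pos hc, ScL_expand J hJne hJpos, hJsum, Finset.smul_sum]
      refine Finset.sum_congr rfl fun L hL => ?_
      rw [smul_smul]
      by_cases hc2 : cuts J ⊆ cuts L
      · rw [if_pos hc2, if_pos ⟨hsub, hc2⟩]
        congr 1
        have hpow : ((-1:ℚ))^(I.blocks.length - J.length)
            = (-1)^(I.blocks.length) * (-1)^(J.length) := by
          rw [← pow_add]
          exact neg_one_pow_eq_of_mod (by omega)
        rw [hpow]
      · rw [if_neg hc2, if_neg (fun h => hc2 h.2)]
        simp
    · rw [if_neg hc]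
      symm
      refine Finset.sum_eq_zero fun L hL => ?_
      rw [if_neg, zero_smul]
      rintro ⟨h1, -⟩
      exact hc (coarsening_of_cuts_subset J I.blocks hJpos hIpos (by rw [hJsum, hIsum]) h1)
  rw [Finset.sum_congr rfl hstep, Finset.sum_comm]
  refine Finset.sum_congr rfl fun L hL => ?_
  rw [← Finset.sum_smul]
  congr 1
  have hfac : ∀ J ∈ comps n, (if (cuts J ⊆ cuts I.blocks ∧ cuts J ⊆ cuts L)
      then (((-1:ℚ)^(I.blocks.length) * (-1)^J.length) * ((-1)^n * (-1)^L.length)) else 0)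
      = (((-1:ℚ))^(I.blocks.length) * ((-1)^n * (-1)^L.length)) *
        (if cuts J ⊆ cuts I.blocks ∩ cuts L then ((-1:ℚ))^J.length else 0) := by
    intro J hJ
    by_cases hc : cuts J ⊆ cuts I.blocks ∩ cuts L
    · rw [if_pos (Finset.subset_inter_iff.1 hc), if_pos hc]
      ring
    · rw [if_neg (fun h => hc (Finset.subset_inter_iff.2 h)), if_neg hc]
      ring
  rw [Finset.sum_congr rfl hfac, ← Finset.mul_sum, G_lemma n hn (cuts I.blocks ∩ cuts L)]
  have hnA : n ∈ cuts I.blocks ∩ cuts L := by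
    rw [Finset.mem_inter]
    constructor
    · have := sum_mem_cuts (show I.blocks ≠ [] from ne_nil_of_mem_comps hn hI)
      rwa [hIsum] at this
    · have := sum_mem_cuts (ne_nil_of_mem_comps hn hL)
      rwa [(mem_comps.1 hL).2] at this
  by_cases hE : (cuts I.blocks ∩ cuts L ∩ Finset.Ioo 0 n) = ∅
  · rw [if_pos ⟨hnA, hE⟩, if_pos hE]
    ring
  · rw [if_neg (fun h => hE h.2), if_neg hE]
    ring

/-- In `NSym`, for every `n ≥ 1`:
`2 · ∑_{I ⊨ n} i₁(i₂−1)⋯(i_l−1) Λ^I = ∑_{I ∈ 𝒞_n} 2^{m₁(I)} R_I`,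
where `𝒞_n` is the set of compositions of `n` all of whose parts are `1` or `2`
and whose last part is `1`, and `m₁(I)` is the number of parts of `I` equal to `1`. -/
theorem two_smul_sum_coeff_lam_eq_sum_ribbon (n : ℕ) (hn : 1 ≤ n) :
    (2 : ℚ) • ∑ I : Composition n,
        ((I.blocks.headI * ((I.blocks.tail).map (fun i => i - 1)).prod : ℕ) : ℚ) • LamProd I
      = ∑ I ∈ Finset.univ.filter
            (fun I : Composition n =>
              (∀ i ∈ I.blocks, i = 1 ∨ i = 2) ∧ I.blocks.getLast? = some 1),
          ((2 : ℚ) ^ (I.blocks.count 1)) • Rib I := by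
  have hL0 : (∑ I : Composition n,
        ((I.blocks.headI * ((I.blocks.tail).map (fun i => i - 1)).prod : ℕ) : ℚ) • LamProd I)
      = ∑ L ∈ comps n, Dfun L • LamL L :=
    sum_comps (fun Lb => Dfun Lb • LamL Lb)
  rw [hL0, Finset.smul_sum, Finset.sum_filter]
  have hterm : ∀ I : Composition n,
      (if ((∀ i ∈ I.blocks, i = 1 ∨ i = 2) ∧ I.blocks.getLast? = some 1)
        then ((2:ℚ)^(I.blocks.count 1)) • Rib I else 0)
      = ∑ L ∈ comps n,
          (if ((∀ x ∈ I.blocks, x = 1 ∨ x = 2) ∧ I.blocks.getLast? = some 1 ∧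
              (cuts I.blocks ∩ cuts L ∩ Finset.Ioo 0 n) = ∅)
            then ((-((-1:ℚ))^n * (-1)^L.length) *
              (((-1:ℚ))^(I.blocks.length) * 2^(I.blocks.count 1))) else 0) • LamL L := by
    intro I
    by_cases hP : (∀ i ∈ I.blocks, i = 1 ∨ i = 2) ∧ I.blocks.getLast? = some 1
    · rw [if_pos hP, Rib_expand hn I, Finset.smul_sum]
      refine Finset.sum_congr rfl fun L hL => ?_
      rw [smul_smul]
      by_cases hE : (cuts I.blocks ∩ cuts L ∩ Finset.Ioo 0 n) = ∅
      · rw [if_pos hE, if_pos ⟨hP.1, hP.2, hE⟩]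
        congr 1
        ring
      · rw [if_neg hE, if_neg (fun h => hE h.2.2)]
        simp
    · rw [if_neg hP]
      symm
      refine Finset.sum_eq_zero fun L hL => ?_
      rw [if_neg (fun h => hP ⟨h.1, h.2.1⟩), zero_smul]
  rw [Finset.sum_congr rfl (fun I _ => hterm I)]
  have htrans : (∑ I : Composition n, ∑ L ∈ comps n,
        (if ((∀ x ∈ I.blocks, x = 1 ∨ x = 2) ∧ I.blocks.getLast? = some 1 ∧
            (cuts I.blocks ∩ cuts L ∩ Finset.Ioo 0 n) = ∅)
          then ((-((-1:ℚ))^n * (-1)^L.length) *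
            (((-1:ℚ))^(I.blocks.length) * 2^(I.blocks.count 1))) else 0) • LamL L)
      = ∑ Ib ∈ comps n, ∑ L ∈ comps n,
        (if ((∀ x ∈ Ib, x = 1 ∨ x = 2) ∧ Ib.getLast? = some 1 ∧
            (cuts Ib ∩ cuts L ∩ Finset.Ioo 0 n) = ∅)
          then ((-((-1:ℚ))^n * (-1)^L.length) *
            (((-1:ℚ))^(Ib.length) * 2^(Ib.count 1))) else 0) • LamL L :=
    sum_comps (fun Ib => ∑ L ∈ comps n,
        (if ((∀ x ∈ Ib, x = 1 ∨ x = 2) ∧ Ib.getLast? = some 1 ∧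
            (cuts Ib ∩ cuts L ∩ Finset.Ioo 0 n) = ∅)
          then ((-((-1:ℚ))^n * (-1)^L.length) *
            (((-1:ℚ))^(Ib.length) * 2^(Ib.count 1))) else 0) • LamL L)
  rw [htrans, Finset.sum_comm]
  refine Finset.sum_congr rfl fun L hL => ?_
  rw [smul_smul, ← Finset.sum_smul]
  congr 1
  obtain ⟨hLpos, hLsum⟩ := mem_comps.1 hL
  have hLne : L ≠ [] := ne_nil_of_mem_comps hn hL
  have hfac : ∀ Ib ∈ comps n,
      (if ((∀ x ∈ Ib, x = 1 ∨ x = 2) ∧ Ib.getLast? = some 1 ∧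
          (cuts Ib ∩ cuts L ∩ Finset.Ioo 0 n) = ∅)
        then ((-((-1:ℚ))^n * (-1)^L.length) *
          (((-1:ℚ))^(Ib.length) * 2^(Ib.count 1))) else 0)
      = (-((-1:ℚ))^n * (-1)^L.length) *
        (if ((∀ x ∈ Ib, x = 1 ∨ x = 2) ∧ Ib.getLast? = some 1 ∧
            (cuts Ib ∩ cuts L ∩ Finset.Ioo 0 n) = ∅)
          then ((-1:ℚ))^(Ib.length) * 2^(Ib.count 1) else 0) := by
    intro Ib hIb
    by_cases hc : ((∀ x ∈ Ib, x = 1 ∨ x = 2) ∧ Ib.getLast? = some 1 ∧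
        (cuts Ib ∩ cuts L ∩ Finset.Ioo 0 n) = ∅)
    · rw [if_pos hc, if_pos hc]
    · rw [if_neg hc, if_neg hc, mul_zero]
  rw [Finset.sum_congr rfl hfac, ← Finset.mul_sum, C_lemma n hn (cuts L)]
  have hcg : Hf (cuts L ∩ Finset.Ioo 0 n) (n-1) = Hf (cuts L) (n-1) := by
    refine Hf_congr (n-1) fun j hj => ?_
    rw [Finset.mem_inter, Finset.mem_Ioo]
    constructor
    · rintro ⟨h1, -⟩; exact h1
    · intro h
      refine ⟨h, ?_, by omega⟩
      have := (Finset.mem_Icc.1 (cuts_subset hLpos h)).1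
      omega
  have hINV := INV L hLne hLpos
  rw [hLsum] at hINV
  rw [hcg, hINV]
  have h2 : ((-1:ℚ))^n * (-1)^n = 1 := by
    rw [← pow_add, neg_one_pow_eq_of_mod (show (n + n) % 2 = 0 % 2 by omega), pow_zero]
  have h3 : ((-1:ℚ))^L.length * (-1)^L.length = 1 := by
    rw [← pow_add, neg_one_pow_eq_of_mod (show (L.length + L.length) % 2 = 0 % 2 by omega),
      pow_zero]
  rw [pow_add]
  linear_combination (-2*Dfun L*((-1:ℚ)^L.length*(-1)^L.length))*h2 + (-2*Dfun L)*h3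

end
end

section
/- For all integers n ≥ 1 and N ≥ 1, the chromatic symmetric polynomial of the path on n vertices satisfies X_{P_n}^{(N)} = Σ_{I = (i_1, …, i_l) ⊨ n} i_1·(i_2 − 1)⋯(i_l − 1) · e_{i_1} e_{i_2} ⋯ e_{i_l}, the sum ranging over all compositions I of n. -/
open scoped Classical

noncomputable section

/-- The chromatic symmetric polynomial `X_G^{(N)} ∈ ℤ[x₁,…,x_N]` of a finite simple graph `G`:
the sum over all proper colorings `c : V → {1,…,N}` of the monomials `∏_{v ∈ V} x_{c v}`. -/
def chromPoly (N : ℕ) {V : Type} [Fintype V] [DecidableEq V] (G : SimpleGraph V) :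
    MvPolynomial (Fin N) ℤ :=
  ∑ c ∈ Finset.univ.filter (fun c : V → Fin N => ∀ u v, G.Adj u v → c u ≠ c v),
    ∏ v, MvPolynomial.X (c v)

namespace ChromAux
open Finset MvPolynomial

variable {N : ℕ}

abbrev A (N : ℕ) := MvPolynomial (Fin N) ℤ

def Yp (N : ℕ) : ℕ → Fin N → A N
  | 0, j => X j
  | n+1, j => X j * ∑ i ∈ Finset.univ.erase j, Yp N n i

def S (N : ℕ) : ℕ → A N
  | 0 => 0
  | n+1 => ∑ j, Yp N n j

def G (N : ℕ) (j : Fin N) : PowerSeries (A N) := PowerSeries.mk fun m => Yp N m j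

def XS (N : ℕ) : PowerSeries (A N) := PowerSeries.X * ∑ j, G N j

def Ej (N : ℕ) (j : Fin N) : PowerSeries (A N) :=
  ∏ i ∈ Finset.univ.erase j, (1 + PowerSeries.C (R := A N) (X i) * PowerSeries.X)

def EE (N : ℕ) : PowerSeries (A N) :=
  ∏ i : Fin N, (1 + PowerSeries.C (R := A N) (X i) * PowerSeries.X)

def D (N : ℕ) : PowerSeries (A N) := ∑ j, PowerSeries.C (R := A N) (X j) * Ej N j

theorem coeff_XS (m : ℕ) : PowerSeries.coeff (R := A N) m (XS N) = S N m := by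
  cases m with
  | zero => rw [XS, mul_comm, PowerSeries.coeff_zero_mul_X]; rfl
  | succ m =>
    rw [XS, PowerSeries.coeff_succ_X_mul, map_sum]
    simp only [G, PowerSeries.coeff_mk]
    rfl

theorem percolor (j : Fin N) :
    (1 + PowerSeries.C (R := A N) (X j) * PowerSeries.X) * G N j
      = PowerSeries.C (R := A N) (X j) * (1 + XS N) := by
  apply PowerSeries.ext
  intro m
  rw [add_mul, one_mul, map_add, mul_assoc, PowerSeries.coeff_C_mul,
    PowerSeries.coeff_C_mul, map_add, PowerSeries.coeff_one, coeff_XS]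
  cases m with
  | zero =>
    rw [mul_comm PowerSeries.X (G N j), PowerSeries.coeff_zero_mul_X]
    simp [G, Yp, S]
  | succ m =>
    rw [PowerSeries.coeff_succ_X_mul]
    simp only [G, PowerSeries.coeff_mk, Nat.succ_ne_zero, if_neg, ite_false]
    show Yp N (m+1) j + X j * Yp N m j = X j * (0 + S N (m+1))
    rw [zero_add]
    show X j * ∑ i ∈ Finset.univ.erase j, Yp N m i + X j * Yp N m j
      = X j * ∑ i, Yp N m i
    rw [← mul_add, Finset.sum_erase_add]
    exact Finset.mem_univ j

theorem main_ps : EE N * (∑ j, G N j) = D N * (1 + XS N) := by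
  rw [Finset.mul_sum, D, Finset.sum_mul]
  refine Finset.sum_congr rfl fun j _ => ?_
  rw [EE, ← Finset.mul_prod_erase Finset.univ _ (Finset.mem_univ j), ← Ej,
    mul_comm (1 + PowerSeries.C (R := A N) (X j) * PowerSeries.X) (Ej N j),
    mul_assoc, percolor, ← mul_assoc, mul_comm (Ej N j), mul_assoc]

theorem coeff_prod_one_add (s : Finset (Fin N)) (m : ℕ) :
    PowerSeries.coeff (R := A N) m (∏ i ∈ s, (1 + PowerSeries.C (R := A N) (X i) * PowerSeries.X))
      = ∑ t ∈ s.powersetCard m, ∏ i ∈ t, X i := by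
  induction s using Finset.induction_on generalizing m with
  | empty =>
    rw [Finset.prod_empty]
    cases m with
    | zero => simp
    | succ m =>
      rw [Finset.powersetCard_eq_empty.2 (by simp), Finset.sum_empty,
        PowerSeries.coeff_one]
      simp
  | insert _ _ ha ih =>
    rename_i a s
    rw [Finset.prod_insert ha, add_mul, one_mul, map_add, ih, mul_assoc,
      PowerSeries.coeff_C_mul]
    cases m with
    | zero =>
      rw [mul_comm PowerSeries.X _, PowerSeries.coeff_zero_mul_X]
      simp
    | succ m =>
      rw [PowerSeries.coeff_succ_X_mul, ih, Finset.powersetCard_succ_insert ha,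
        Finset.sum_union, Finset.sum_image]
      · congr 1
        rw [Finset.mul_sum]
        refine Finset.sum_congr rfl fun t ht => ?_
        rw [Finset.prod_insert]
        intro hat
        exact ha ((Finset.mem_powersetCard.1 ht).1 hat)
      · intro t ht t' ht' he
        have hat : a ∉ t := fun h => ha ((Finset.mem_powersetCard.1 ht).1 h)
        have hat' : a ∉ t' := fun h => ha ((Finset.mem_powersetCard.1 ht').1 h)
        rw [← Finset.erase_insert hat, ← Finset.erase_insert hat', he]
      · rw [Finset.disjoint_right]
        rintro t ht ht2
        obtain ⟨u, hu, rfl⟩ := Finset.mem_image.1 ht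
        exact ha ((Finset.mem_powersetCard.1 ht2).1 (Finset.mem_insert_self a u))

theorem coeff_EE (m : ℕ) :
    PowerSeries.coeff (R := A N) m (EE N) = esymm (Fin N) ℤ m :=
  coeff_prod_one_add Finset.univ m

theorem coeff_D (m : ℕ) :
    PowerSeries.coeff (R := A N) m (D N) = (m+1) • esymm (Fin N) ℤ (m+1) := by
  rw [D, map_sum]
  simp only [PowerSeries.coeff_C_mul, Ej, coeff_prod_one_add, Finset.mul_sum]
  have h1 : ∀ j : Fin N, ∀ t ∈ (Finset.univ.erase j).powersetCard m,
      (X j : A N) * ∏ i ∈ t, X i = ∏ i ∈ insert j t, X i := by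
    intro j t ht
    rw [Finset.prod_insert]
    intro hjt
    exact (Finset.mem_erase.1 ((Finset.mem_powersetCard.1 ht).1 hjt)).1 rfl
  rw [Finset.sum_congr rfl fun j _ => Finset.sum_congr rfl fun t ht => h1 j t ht]
  rw [← Finset.sum_sigma (Finset.univ : Finset (Fin N))
    (fun j => (Finset.univ.erase j).powersetCard m)
    (fun p => ∏ i ∈ insert p.1 p.2, (X i : A N))]
  rw [esymm, Finset.smul_sum]
  have h2 : ∀ s ∈ Finset.univ.powersetCard (m+1),
      (m+1) • ∏ i ∈ s, (X i : A N) = ∑ j ∈ s, ∏ i ∈ s, (X i : A N) := by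
    intro s hs
    rw [Finset.sum_const, (Finset.mem_powersetCard.1 hs).2]
  rw [Finset.sum_congr rfl h2]
  rw [← Finset.sum_sigma (Finset.univ.powersetCard (m+1) : Finset (Finset (Fin N)))
    (fun s => s) (fun p => ∏ i ∈ p.1, (X i : A N))]
  refine Finset.sum_nbij' (fun x => ⟨insert x.1 x.2, x.1⟩) (fun y => ⟨y.2, y.1.erase y.2⟩)
    ?_ ?_ ?_ ?_ ?_
  · rintro ⟨j, t⟩ hx
    rw [Finset.mem_sigma] at hx ⊢
    obtain ⟨-, ht⟩ := hx
    obtain ⟨hsub, hcard⟩ := Finset.mem_powersetCard.1 ht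
    have hjt : j ∉ t := fun h => (Finset.mem_erase.1 (hsub h)).1 rfl
    exact ⟨Finset.mem_powersetCard.2 ⟨Finset.subset_univ _,
      by rw [Finset.card_insert_of_notMem hjt, hcard]⟩, Finset.mem_insert_self _ _⟩
  · rintro ⟨s, j⟩ hy
    rw [Finset.mem_sigma] at hy ⊢
    obtain ⟨hs, hj⟩ := hy
    obtain ⟨-, hcard⟩ := Finset.mem_powersetCard.1 hs
    refine ⟨Finset.mem_univ _, Finset.mem_powersetCard.2 ⟨?_, ?_⟩⟩
    · intro a ha
      rw [Finset.mem_erase] at ha ⊢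
      exact ⟨ha.1, Finset.mem_univ _⟩
    · rw [Finset.card_erase_of_mem hj, hcard]
      omega
  · rintro ⟨j, t⟩ hx
    rw [Finset.mem_sigma] at hx
    obtain ⟨-, ht⟩ := hx
    have hjt : j ∉ t := fun h =>
      (Finset.mem_erase.1 ((Finset.mem_powersetCard.1 ht).1 h)).1 rfl
    simp only
    rw [Finset.erase_insert hjt]
  · rintro ⟨s, j⟩ hy
    rw [Finset.mem_sigma] at hy
    simp only
    rw [Finset.insert_erase hy.2]
  · rintro ⟨j, t⟩ hx
    rfl



theorem S_zero : S N 0 = 0 := rfl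

theorem coeff_sumG (m : ℕ) :
    PowerSeries.coeff (R := A N) m (∑ j, G N j) = S N (m+1) := by
  rw [map_sum]
  simp only [G, PowerSeries.coeff_mk]
  rfl

theorem S_rec (N m : ℕ) :
    S N (m+1) = (m+1) • esymm (Fin N) ℤ (m+1)
      + ∑ a ∈ Finset.range m, a • (esymm (Fin N) ℤ (a+1) * S N (m-a)) := by
  have hco := congrArg (PowerSeries.coeff (R := A N) m) (main_ps (N := N))
  rw [PowerSeries.coeff_mul, PowerSeries.coeff_mul,
    Finset.Nat.sum_antidiagonal_eq_sum_range_succ_mk,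
    Finset.Nat.sum_antidiagonal_eq_sum_range_succ_mk] at hco
  simp only [coeff_EE, coeff_sumG, coeff_D, map_add, PowerSeries.coeff_one, coeff_XS] at hco
  rw [Finset.sum_range_succ', Finset.sum_range_succ] at hco
  simp only [Nat.sub_zero, Nat.sub_self, esymm_zero, one_mul, if_pos, S_zero, add_zero,
    mul_one] at hco
  have e1 : ∀ k ∈ Finset.range m,
      esymm (Fin N) ℤ (k+1) * S N (m-(k+1)+1) = esymm (Fin N) ℤ (k+1) * S N (m-k) := by
    intro k hk
    rw [Finset.mem_range] at hk
    have : m - (k+1) + 1 = m - k := by omega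
    rw [this]
  have e2 : ∀ k ∈ Finset.range m,
      ((k+1) • esymm (Fin N) ℤ (k+1)) * ((if m-k = 0 then (1 : A N) else 0) + S N (m-k))
        = k • (esymm (Fin N) ℤ (k+1) * S N (m-k)) + esymm (Fin N) ℤ (k+1) * S N (m-k) := by
    intro k hk
    rw [Finset.mem_range] at hk
    rw [if_neg (by omega), zero_add, smul_mul_assoc, succ_nsmul]
  rw [Finset.sum_congr rfl e1, Finset.sum_congr rfl e2, Finset.sum_add_distrib] at hco
  have goal' : (∑ k ∈ Finset.range m, esymm (Fin N) ℤ (k+1) * S N (m-k)) + S N (m+1)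
      = (∑ k ∈ Finset.range m, esymm (Fin N) ℤ (k+1) * S N (m-k))
        + ((m+1) • esymm (Fin N) ℤ (m+1)
          + ∑ k ∈ Finset.range m, k • (esymm (Fin N) ℤ (k+1) * S N (m-k))) := by
    rw [hco]
    abel
  exact add_left_cancel goal'



theorem path_adj_succ {n : ℕ} (a b : Fin (n+1)) :
    (SimpleGraph.pathGraph (n+2)).Adj a.succ b.succ ↔ (SimpleGraph.pathGraph (n+1)).Adj a b := by
  simp only [SimpleGraph.pathGraph_adj, Fin.val_succ]
  omega

theorem path_adj_zero_succ {n : ℕ} (b : Fin (n+1)) :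
    (SimpleGraph.pathGraph (n+2)).Adj 0 b.succ ↔ b = 0 := by
  simp only [SimpleGraph.pathGraph_adj, Fin.val_succ, Fin.val_zero, Fin.ext_iff]
  omega

theorem proper_cons_iff {n : ℕ} (j : Fin N) (d : Fin (n+1) → Fin N) :
    (∀ u v, (SimpleGraph.pathGraph (n+2)).Adj u v →
        (Fin.cons j d : Fin (n+2) → Fin N) u ≠ (Fin.cons j d : Fin (n+2) → Fin N) v) ↔
      ((∀ u v, (SimpleGraph.pathGraph (n+1)).Adj u v → d u ≠ d v) ∧ d 0 ≠ j) := by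
  constructor
  · intro h
    refine ⟨fun u v huv => ?_, ?_⟩
    · have := h u.succ v.succ ((path_adj_succ u v).2 huv)
      simpa [Fin.cons_succ] using this
    · have := h 0 (Fin.succ 0) ((path_adj_zero_succ 0).2 rfl)
      simp only [Fin.cons_succ, Fin.cons_zero] at this
      exact fun e => this e.symm
  · rintro ⟨hd, h0⟩ u v huv
    induction u using Fin.cases with
    | zero =>
      induction v using Fin.cases with
      | zero => exact absurd huv (SimpleGraph.irrefl _)
      | succ b =>
        have hb : b = 0 := (path_adj_zero_succ b).1 huv
        subst hb
        simpa [Fin.cons_succ, Fin.cons_zero] using fun e => h0 e.symm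
    | succ a =>
      induction v using Fin.cases with
      | zero =>
        have ha : a = 0 := (path_adj_zero_succ a).1 huv.symm
        subst ha
        simpa [Fin.cons_succ, Fin.cons_zero] using h0
      | succ b =>
        simpa [Fin.cons_succ] using hd a b ((path_adj_succ a b).1 huv)

theorem sum_fiber (N : ℕ) : ∀ (n : ℕ) (j : Fin N),
    ∑ c ∈ Finset.univ.filter (fun c : Fin (n+1) → Fin N =>
        (∀ u v, (SimpleGraph.pathGraph (n+1)).Adj u v → c u ≠ c v) ∧ c 0 = j),
      ∏ v, X (c v) = Yp N n j
  | 0, j => by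
    have hset : Finset.univ.filter (fun c : Fin 1 → Fin N =>
        (∀ u v, (SimpleGraph.pathGraph 1).Adj u v → c u ≠ c v) ∧ c 0 = j)
        = {fun _ => j} := by
      ext c
      simp only [mem_filter, mem_univ, true_and, mem_singleton]
      constructor
      · rintro ⟨-, h0⟩
        funext x
        have : x = 0 := Subsingleton.elim _ _
        rw [this, h0]
      · rintro rfl
        refine ⟨fun u v huv => ?_, rfl⟩
        have : u = v := Subsingleton.elim _ _
        exact absurd huv (this ▸ SimpleGraph.irrefl _)
    rw [hset, Finset.sum_singleton]
    simp [Yp]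
  | n+1, j => by
    have step1 : ∑ c ∈ Finset.univ.filter (fun c : Fin (n+2) → Fin N =>
        (∀ u v, (SimpleGraph.pathGraph (n+2)).Adj u v → c u ≠ c v) ∧ c 0 = j),
        ∏ v, (X (c v) : MvPolynomial (Fin N) ℤ)
        = ∑ d ∈ Finset.univ.filter (fun d : Fin (n+1) → Fin N =>
        (∀ u v, (SimpleGraph.pathGraph (n+1)).Adj u v → d u ≠ d v) ∧ d 0 ≠ j),
        X j * ∏ v, (X (d v) : MvPolynomial (Fin N) ℤ) := by
      refine Finset.sum_nbij' (fun c => Fin.tail c) (fun d => Fin.cons j d) ?_ ?_ ?_ ?_ ?_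
      · intro c hc
        rw [mem_filter] at hc ⊢
        obtain ⟨-, hp, h0⟩ := hc
        have hc' : Fin.cons j (Fin.tail c) = c := by rw [← h0]; exact Fin.cons_self_tail c
        have := (proper_cons_iff j (Fin.tail c)).1 (by rw [hc']; exact hp)
        exact ⟨mem_univ _, this.1, this.2⟩
      · intro d hd
        rw [mem_filter] at hd ⊢
        obtain ⟨-, hp, h0⟩ := hd
        exact ⟨mem_univ _, (proper_cons_iff j d).2 ⟨hp, h0⟩, Fin.cons_zero _ _⟩
      · intro c hc
        rw [mem_filter] at hc
        rw [← hc.2.2]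
        exact Fin.cons_self_tail c
      · intro d hd
        exact Fin.tail_cons (α := fun _ : Fin (n+2) => Fin N) j d
      · intro c hc
        rw [mem_filter] at hc
        rw [Fin.prod_univ_succ, ← hc.2.2]
        rfl
    rw [step1, ← Finset.mul_sum]
    have step2 : ∑ d ∈ Finset.univ.filter (fun d : Fin (n+1) → Fin N =>
        (∀ u v, (SimpleGraph.pathGraph (n+1)).Adj u v → d u ≠ d v) ∧ d 0 ≠ j),
        ∏ v, (X (d v) : MvPolynomial (Fin N) ℤ) = ∑ i ∈ Finset.univ.erase j, Yp N n i := by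
      rw [← Finset.sum_fiberwise_of_maps_to (g := fun d => d 0) (t := Finset.univ.erase j)
        (fun d hd => by
          rw [mem_filter] at hd
          exact Finset.mem_erase.2 ⟨hd.2.2, mem_univ _⟩)]
      refine Finset.sum_congr rfl fun i hi => ?_
      rw [Finset.mem_erase] at hi
      rw [← sum_fiber N n i]
      congr 1
      rw [Finset.filter_filter]
      refine Finset.filter_congr fun d _ => ?_
      constructor
      · rintro ⟨⟨hp, -⟩, h0⟩; exact ⟨hp, h0⟩
      · rintro ⟨hp, h0⟩; exact ⟨⟨hp, h0 ▸ hi.1⟩, h0⟩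
    rw [step2]
    rfl


theorem chromPoly_path' (N n : ℕ) :
    ∑ c ∈ Finset.univ.filter (fun c : Fin (n+1) → Fin N =>
        ∀ u v, (SimpleGraph.pathGraph (n+1)).Adj u v → c u ≠ c v),
      ∏ v, X (c v) = S N (n+1) := by
  rw [show S N (n+1) = ∑ j, Yp N n j from rfl]
  rw [← Finset.sum_fiberwise_of_maps_to (g := fun c => c 0) (t := Finset.univ)
    (fun c _ => mem_univ _)]
  refine Finset.sum_congr rfl fun j _ => ?_
  rw [← sum_fiber N n j, Finset.filter_filter]



theorem comp_heq {n m : ℕ} (h : n = m) (I : Composition n) (J : Composition m)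
    (hb : I.blocks = J.blocks) : HEq I J := by
  subst h; exact heq_of_eq (Composition.ext hb)

theorem comp_blocks_ne_nil {n : ℕ} (I : Composition (n+1)) : I.blocks ≠ [] := by
  intro h
  have := I.blocks_sum
  rw [h] at this
  simp at this

theorem comp_getLast_pos {n : ℕ} (I : Composition (n+1)) :
    0 < I.blocks.getLast (comp_blocks_ne_nil I) :=
  I.blocks_pos (List.getLast_mem _)

theorem comp_getLast_le {n : ℕ} (I : Composition (n+1)) :
    I.blocks.getLast (comp_blocks_ne_nil I) ≤ n + 1 := by
  have h := List.single_le_sum (fun (x : ℕ) (_ : x ∈ I.blocks) => Nat.zero_le x) _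
    (List.getLast_mem (comp_blocks_ne_nil I))
  rwa [I.blocks_sum] at h

theorem comp_dropLast_sum {n : ℕ} (I : Composition (n+1)) :
    I.blocks.dropLast.sum = n + 1 - I.blocks.getLast (comp_blocks_ne_nil I) := by
  have h := List.dropLast_concat_getLast (comp_blocks_ne_nil I)
  have h2 : (I.blocks.dropLast ++ [I.blocks.getLast (comp_blocks_ne_nil I)]).sum = n + 1 := by
    rw [h, I.blocks_sum]
  rw [List.sum_append, List.sum_cons, List.sum_nil] at h2
  omega

def peelEquiv (n : ℕ) : (Σ k : Fin (n+1), Composition (n - (k : ℕ))) ≃ Composition (n+1) where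
  toFun p := ⟨p.2.blocks ++ [(p.1 : ℕ) + 1],
    fun hi => by
      rcases List.mem_append.1 hi with h | h
      · exact p.2.blocks_pos h
      · simp only [List.mem_singleton] at h; omega,
    by
      have hk := p.1.is_lt
      have hs := p.2.blocks_sum
      rw [List.sum_append, List.sum_cons, List.sum_nil, hs]
      omega⟩
  invFun I := ⟨⟨I.blocks.getLast (comp_blocks_ne_nil I) - 1, by
      have := comp_getLast_le I; omega⟩,
    ⟨I.blocks.dropLast,
      fun hi => I.blocks_pos (List.dropLast_subset _ hi),
      by
        rw [comp_dropLast_sum I]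
        have h1 := comp_getLast_pos I
        have h2 := comp_getLast_le I
        simp only [Fin.val_mk]
        omega⟩⟩
  left_inv p := by
    rcases p with ⟨k, J⟩
    have hlast : (J.blocks ++ [(k : ℕ) + 1]).getLast (by simp) = (k : ℕ) + 1 :=
      List.getLast_concat
    refine Sigma.ext ?_ ?_
    · simp only
      apply Fin.ext
      simp only [Fin.val_mk]
      rw [List.getLast_congr (by simp) (by simp) rfl, hlast]
      omega
    · simp only
      refine comp_heq ?_ _ _ ?_
      · congr 1
        rw [List.getLast_congr (by simp) (by simp) rfl, hlast]
        omega
      · simp only [List.dropLast_concat]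
  right_inv I := by
    apply Composition.ext
    simp only
    have h1 := comp_getLast_pos I
    have : I.blocks.getLast (comp_blocks_ne_nil I) - 1 + 1
        = I.blocks.getLast (comp_blocks_ne_nil I) := by omega
    rw [this]
    exact List.dropLast_concat_getLast _




open Finset MvPolynomial

theorem comp_zero_blocks (J : Composition 0) : J.blocks = [] := by
  rcases hb : J.blocks with _ | ⟨b, t⟩
  · rfl
  · exfalso
    have hs := J.blocks_sum
    rw [hb] at hs
    have hpos : 0 < b := J.blocks_pos (by rw [hb]; exact List.mem_cons_self)
    simp only [List.sum_cons] at hs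
    omega

def fblocks (N : ℕ) (bl : List ℕ) : MvPolynomial (Fin N) ℤ :=
  (bl.headI * ((bl.tail).map (fun i => i - 1)).prod) •
    (bl.map (fun k => MvPolynomial.esymm (Fin N) ℤ k)).prod

def R (N n : ℕ) : MvPolynomial (Fin N) ℤ := ∑ I : Composition n, fblocks N I.blocks

theorem fblocks_append (N a : ℕ) (bl : List ℕ) (hbl : bl ≠ []) :
    fblocks N (bl ++ [a+1]) = a • (esymm (Fin N) ℤ (a+1) * fblocks N bl) := by
  obtain ⟨b, t, rfl⟩ := List.exists_cons_of_ne_nil hbl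
  simp only [fblocks, List.cons_append, List.headI_cons, List.tail_cons, List.map_append,
    List.prod_append, List.map_cons, List.prod_cons, List.map_nil, List.prod_nil, mul_one,
    Nat.add_sub_cancel, nsmul_eq_mul]
  push_cast
  ring

theorem fblocks_single (N m : ℕ) :
    fblocks N [m+1] = (m+1) • esymm (Fin N) ℤ (m+1) := by
  simp [fblocks]

theorem R_rec (N m : ℕ) :
    R N (m+1) = (m+1) • esymm (Fin N) ℤ (m+1)
      + ∑ a ∈ Finset.range m, a • (esymm (Fin N) ℤ (a+1) * R N (m-a)) := by
  have h0 : R N (m+1)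
      = ∑ p : (Σ k : Fin (m+1), Composition (m - (k : ℕ))),
          fblocks N ((peelEquiv m p).blocks) := (Equiv.sum_comp (peelEquiv m) _).symm
  have h1 : R N (m+1)
      = ∑ k : Fin (m+1), ∑ J : Composition (m - (k : ℕ)),
          fblocks N (J.blocks ++ [(k : ℕ) + 1]) := by
    rw [h0, ← Finset.univ_sigma_univ, Finset.sum_sigma]
    rfl
  rw [h1, Fin.sum_univ_eq_sum_range
    (fun a => ∑ J : Composition (m - a), fblocks N (J.blocks ++ [a + 1])) (m+1),
    Finset.sum_range_succ]
  have h2 : ∑ J : Composition (m - m), fblocks N (J.blocks ++ [m + 1])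
      = (m+1) • esymm (Fin N) ℤ (m+1) := by
    have hmm : m - m = 0 := by omega
    rw [hmm] at *
    rw [Finset.sum_congr rfl (fun (J : Composition 0) _ => by
      rw [comp_zero_blocks J, List.nil_append, fblocks_single])]
    rw [Finset.sum_const, Finset.card_univ, composition_card]
    norm_num
  rw [h2, add_comm]
  congr 1
  refine Finset.sum_congr rfl fun a ha => ?_
  rw [Finset.mem_range] at ha
  obtain ⟨c, hc⟩ : ∃ c, m - a = c + 1 := ⟨m - a - 1, by omega⟩
  rw [hc]
  rw [Finset.sum_congr rfl (fun (J : Composition (c+1)) _ =>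
    fblocks_append N a J.blocks (comp_blocks_ne_nil J))]
  rw [← Finset.smul_sum, ← Finset.mul_sum]
  rfl



theorem S_eq_R (N n : ℕ) : S N (n+1) = R N (n+1) := by
  induction n using Nat.strong_induction_on with
  | _ n ih =>
    rw [S_rec, R_rec]
    rw [add_right_inj]
    refine Finset.sum_congr rfl fun a ha => ?_
    rw [Finset.mem_range] at ha
    obtain ⟨b, hb⟩ : ∃ b, n - a = b + 1 := ⟨n - a - 1, by omega⟩
    rw [hb, ih b (by omega)]

end ChromAux

/-- For all `n ≥ 1` and `N ≥ 1`, the chromatic symmetric polynomial of the path on `n`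
vertices equals `∑_{I=(i₁,…,i_l) ⊨ n} i₁(i₂−1)⋯(i_l−1) e_{i₁} e_{i₂} ⋯ e_{i_l}`. -/
theorem chromPoly_pathGraph_eq_sum_esymm (n N : ℕ) (hn : 1 ≤ n) (hN : 1 ≤ N) :
    chromPoly N (SimpleGraph.pathGraph n)
      = ∑ I : Composition n,
          (I.blocks.headI * ((I.blocks.tail).map (fun i => i - 1)).prod) •
            (I.blocks.map (fun k => MvPolynomial.esymm (Fin N) ℤ k)).prod := by
  obtain ⟨m, rfl⟩ : ∃ m, n = m + 1 := ⟨n - 1, by omega⟩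
  have h1 : chromPoly N (SimpleGraph.pathGraph (m+1)) = ChromAux.S N (m+1) := by
    unfold chromPoly
    convert ChromAux.chromPoly_path' N m using 2
    exact Finset.filter_congr_decidable _ _ _
  rw [h1, ChromAux.S_eq_R]
  rfl

end
end
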